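/- arXiv:2112.11029 — 4 statements merged into one kernel-verified Lean document; each statement's English description precedes it below -/
import Mathlib

section
/- Suppose the kernel functions K_1,…,K_n are singular and J is an arbitrary n-field function. If y ∈ S̄ satisfies 0 < y_1 and y_n < 1 (so all coordinates lie in (0,1)), and j ∈ {0,1,…,n} is such that m_j(y) ≠ -∞, then there is a relative neighborhood of y in S̄ on which m_j is finite-valued and Lipschitz continuous. In particular, the map m := (m_0, m_1, …, m_n) is locally Lipschitz continuous on the regularity set Y. -/
open Set Filter
open scoped BigOperators Topology

noncomputable section

/-- The real part of an extended-real-valued function. -/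
def toR (K : ℝ → EReal) : ℝ → ℝ := fun t => (K t).toReal

/-- A *kernel function*: finite-valued, continuous and concave on `[-1,0)` and `(0,1]`,
never `+∞`, and with coinciding one-sided limits at `0` (given by the value `K 0`). -/
structure IsKernel (K : ℝ → EReal) : Prop where
  ne_top : ∀ t, K t ≠ ⊤
  finite_left : ∀ t ∈ Ico (-1:ℝ) 0, K t ≠ ⊥
  finite_right : ∀ t ∈ Ioc (0:ℝ) 1, K t ≠ ⊥
  cont_left : ContinuousOn (toR K) (Ico (-1:ℝ) 0)
  cont_right : ContinuousOn (toR K) (Ioc (0:ℝ) 1)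
  concave_left : ConcaveOn ℝ (Ico (-1:ℝ) 0) (toR K)
  concave_right : ConcaveOn ℝ (Ioc (0:ℝ) 1) (toR K)
  tendsto_left : Tendsto K (nhdsWithin 0 (Iio 0)) (nhds (K 0))
  tendsto_right : Tendsto K (nhdsWithin 0 (Ioi 0)) (nhds (K 0))

/-- Left one-sided derivative. -/
def Dm (f : ℝ → ℝ) (t : ℝ) : ℝ := derivWithin f (Iio t) t

/-- Right one-sided derivative. -/
def Dp (f : ℝ → ℝ) (t : ℝ) : ℝ := derivWithin f (Ioi t) t

/-- Condition (PM_c): periodized `c`-monotonicity. -/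
def PMcond (K : ℝ → EReal) (c : ℝ) : Prop :=
  ∀ t ∈ Ioo (0:ℝ) 1, c ≤ Dm (toR K) t - Dm (toR K) (t - 1)

/-- An *n-field function*: bounded above, never `+∞`, finite at more than `n` points of
`[0,1]`, where the endpoints count with weight `1/2`. -/
structure IsNField (n : ℕ) (J : ℝ → EReal) : Prop where
  ne_top : ∀ t, J t ≠ ⊤
  bdd : ∃ M : ℝ, ∀ t ∈ Icc (0:ℝ) 1, J t ≤ (M : EReal)
  count : (∃ T : Finset ℝ, ↑T ⊆ {t | t ∈ Ioo (0:ℝ) 1 ∧ J t ≠ ⊥} ∧ n + 1 ≤ T.card) ∨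
    ((∃ T : Finset ℝ, ↑T ⊆ {t | t ∈ Ioo (0:ℝ) 1 ∧ J t ≠ ⊥} ∧ n ≤ T.card) ∧
      (J 0 ≠ ⊥ ∨ J 1 ≠ ⊥))

/-- The open simplex `S`. -/
def openSimplex (n : ℕ) : Set (Fin n → ℝ) :=
  {y | StrictMono y ∧ ∀ i, y i ∈ Ioo (0:ℝ) 1}

/-- The closed simplex `S̄`. -/
def closedSimplex (n : ℕ) : Set (Fin n → ℝ) :=
  {y | Monotone y ∧ ∀ i, y i ∈ Icc (0:ℝ) 1}

/-- The left endpoint `y_j` of `I_j(y)`, with the convention `y_0 = 0`. -/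
def nodeLo {n : ℕ} (y : Fin n → ℝ) (j : ℕ) : ℝ :=
  if h : 0 < j ∧ j ≤ n then y ⟨j - 1, by omega⟩ else 0

/-- The right endpoint `y_{j+1}` of `I_j(y)`, with the convention `y_{n+1} = 1`. -/
def nodeHi {n : ℕ} (y : Fin n → ℝ) (j : ℕ) : ℝ :=
  if h : j < n then y ⟨j, h⟩ else 1

/-- The interval `I_j(y) = [y_j, y_{j+1}]`. -/
def Ij {n : ℕ} (y : Fin n → ℝ) (j : ℕ) : Set ℝ := Icc (nodeLo y j) (nodeHi y j)

/-- The sum of translates function `F(y,t) = J(t) + ∑ K_j(t - y_j)`. -/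
def SOT {n : ℕ} (K : Fin n → ℝ → EReal) (J : ℝ → EReal) (y : Fin n → ℝ) (t : ℝ) : EReal :=
  J t + ∑ i, K i (t - y i)

/-- The interval maximum `m_j(y) = sup_{t ∈ I_j(y)} F(y,t)`. -/
def mj {n : ℕ} (K : Fin n → ℝ → EReal) (J : ℝ → EReal) (y : Fin n → ℝ) (j : ℕ) : EReal :=
  ⨆ t ∈ Ij y j, SOT K J y t

/-- The regularity set `Y`. -/
def regSet {n : ℕ} (K : Fin n → ℝ → EReal) (J : ℝ → EReal) : Set (Fin n → ℝ) :=
  {y ∈ openSimplex n | ∀ j ≤ n, mj K J y j ≠ ⊥}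

/-- The difference function `Φ(y) = (m_1 - m_0, …, m_n - m_{n-1})`. -/
def PhiFun {n : ℕ} (K : Fin n → ℝ → EReal) (J : ℝ → EReal) (y : Fin n → ℝ) : Fin n → ℝ :=
  fun i => (mj K J y ((i : ℕ) + 1)).toReal - (mj K J y (i : ℕ)).toReal

/-- A map between (pseudo)metric spaces is *locally bi-Lipschitz* if every point has a
neighborhood on which the map is a bi-Lipschitz homeomorphism onto its image. -/
def LocallyBiLipschitz {α β : Type*} [PseudoMetricSpace α] [PseudoMetricSpace β]
    (f : α → β) : Prop :=
  ∀ x : α, ∃ U ∈ 𝓝 x, ∃ c C : ℝ, 0 < c ∧ ∀ a ∈ U, ∀ b ∈ U,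
    c * dist a b ≤ dist (f a) (f b) ∧ dist (f a) (f b) ≤ C * dist a b

/-- The relative interior of `[a,b] ⊆ [0,1]` in the space `[0,1]`. -/
def relIntIcc (a b : ℝ) : Set ℝ :=
  (if a = 0 then Ici a else Ioi a) ∩ (if b = 1 then Iic b else Iio b)

/-- Condition `(∞₊)`. -/
def CondInfPlus (J : ℝ → EReal) : Prop :=
  J 0 = ⊥ ∧ Tendsto J (nhdsWithin 0 (Ioi 0)) (nhds ⊥)

/-- Condition `(∞₋)`. -/
def CondInfMinus (J : ℝ → EReal) : Prop :=
  J 1 = ⊥ ∧ Tendsto J (nhdsWithin 1 (Iio 1)) (nhds ⊥)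

/-- Fenton's cusp condition `(∞'₊)`. -/
def CuspPlus (J : ℝ → EReal) : Prop :=
  ∀ M : ℝ, ∃ δ > (0:ℝ), ∀ s t : ℝ, 0 ≤ s → s < t → t ≤ δ →
    J s ≠ ⊥ → J t ≠ ⊥ → M ≤ ((J t).toReal - (J s).toReal) / (t - s)

/-- Fenton's cusp condition `(∞'₋)`. -/
def CuspMinus (J : ℝ → EReal) : Prop :=
  ∀ M : ℝ, ∃ δ > (0:ℝ), ∀ t s : ℝ, 1 - δ ≤ t → t < s → s ≤ 1 →
    J s ≠ ⊥ → J t ≠ ⊥ → ((J t).toReal - (J s).toReal) / (t - s) ≤ -M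

/-- `L : [0,1] → [0,∞)` is log-concave:
`L(λs + (1-λ)t) ≥ L(s)^λ L(t)^{1-λ}`. -/
def LogConcaveOn01 (L : ℝ → ℝ) : Prop :=
  ∀ s ∈ Icc (0:ℝ) 1, ∀ t ∈ Icc (0:ℝ) 1, ∀ l ∈ Icc (0:ℝ) 1,
    L s ^ l * L t ^ (1 - l) ≤ L (l * s + (1 - l) * t)



section AuxLemmas

lemma coe_fsum {ι : Type*} (s : Finset ι) (f : ι → ℝ) :
    ((∑ i ∈ s, f i : ℝ) : EReal) = ∑ i ∈ s, (f i : EReal) :=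
  map_sum (⟨⟨Real.toEReal, EReal.coe_zero⟩, EReal.coe_add⟩ : ℝ →+ EReal) f s

/-- Lipschitz from concavity on a compact subinterval. -/
lemma concave_lipschitz {f : ℝ → ℝ} {A B u v : ℝ}
    (hf : ConcaveOn ℝ (Icc A B) f) (hA : A < u) (huv : u ≤ v) (hB : v < B) :
    ∃ Λ : ℝ, 0 ≤ Λ ∧ ∀ s ∈ Icc u v, ∀ s' ∈ Icc u v, |f s - f s'| ≤ Λ * |s - s'| := by
  have hg : ConvexOn ℝ (Icc A B) (-f) := neg_convexOn_iff.2 hf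
  set g : ℝ → ℝ := -f with hgdef
  have hAB : A < B := lt_of_lt_of_le hA (le_trans huv hB.le)
  have hAmem : A ∈ Icc A B := ⟨le_refl _, hAB.le⟩
  have hBmem : B ∈ Icc A B := ⟨hAB.le, le_refl _⟩
  set SA := (g u - g A) / (u - A) with hSA
  set SB := (g B - g v) / (B - v) with hSB
  set Λ := max |SA| |SB| with hΛ
  refine ⟨Λ, le_max_iff.2 (Or.inl (abs_nonneg _)), ?_⟩
  have main : ∀ s ∈ Icc u v, ∀ s' ∈ Icc u v, s < s' → |f s - f s'| ≤ Λ * |s - s'| := by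
    intro s hs s' hs' hss
    have hsmem : s ∈ Icc A B := ⟨le_trans hA.le hs.1, hs.2.trans hB.le⟩
    have hs'mem : s' ∈ Icc A B := ⟨le_trans hA.le hs'.1, hs'.2.trans hB.le⟩
    have hAs : A < s := lt_of_lt_of_le hA hs.1
    have hs'B : s' < B := lt_of_le_of_lt hs'.2 hB
    have hl : SA ≤ (g s' - g s) / (s' - s) := by
      have h1 : SA ≤ (g s' - g A) / (s' - A) := by
        rcases eq_or_lt_of_le (hs.1.trans hss.le : u ≤ s') with h | h
        · rw [hSA, h]
        · exact hg.secant_mono_aux2 hAmem hs'mem hA h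
      exact h1.trans (hg.secant_mono_aux3 hAmem hs'mem hAs hss)
    have hr : (g s' - g s) / (s' - s) ≤ SB := by
      have h1 : (g s' - g s) / (s' - s) ≤ (g B - g s) / (B - s) :=
        hg.secant_mono_aux2 hsmem hBmem hss hs'B
      refine h1.trans ?_
      rcases eq_or_lt_of_le (hss.le.trans hs'.2 : s ≤ v) with h | h
      · rw [hSB, h]
      · exact hg.secant_mono_aux3 hsmem hBmem h hB
    have hpos : 0 < s' - s := by linarith
    have h1 : SA * (s' - s) ≤ g s' - g s := (le_div_iff₀ hpos).mp hl
    have h2 : g s' - g s ≤ SB * (s' - s) := (div_le_iff₀ hpos).mp hr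
    have hm1 : -Λ ≤ SA := by
      have := le_max_left |SA| |SB|
      have := neg_abs_le SA
      rw [hΛ]; linarith
    have hm2 : SB ≤ Λ := (le_abs_self SB).trans (le_max_right _ _)
    have habs : |s - s'| = s' - s := by rw [abs_sub_comm]; exact abs_of_pos hpos
    have hgf : g s' - g s = f s - f s' := by simp [hgdef]; ring
    rw [← hgf, habs, abs_le]
    constructor
    · nlinarith
    · nlinarith
  intro s hs s' hs'
  rcases lt_trichotomy s s' with h | h | h
  · exact main s hs s' hs' h
  · simp [h]
  · rw [abs_sub_comm, abs_sub_comm s s']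
    exact main s' hs' s hs h

lemma kernel_small {K : ℝ → EReal} (hK : IsKernel K) (h0 : K 0 = ⊥) (R : ℝ) :
    ∃ η > (0:ℝ), ∀ s : ℝ, |s| ≤ η → K s ≤ (R : EReal) := by
  have hbR : (⊥ : EReal) < (R : EReal) := EReal.bot_lt_coe R
  have hL : ∀ᶠ s in 𝓝[<] (0:ℝ), K s < (R : EReal) := by
    have h := hK.tendsto_left; rw [h0] at h
    exact h.eventually_lt_const hbR
  have hR : ∀ᶠ s in 𝓝[>] (0:ℝ), K s < (R : EReal) := by
    have h := hK.tendsto_right; rw [h0] at h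
    exact h.eventually_lt_const hbR
  rw [eventually_nhdsWithin_iff, Metric.eventually_nhds_iff] at hL hR
  obtain ⟨ε1, hε1, H1⟩ := hL
  obtain ⟨ε2, hε2, H2⟩ := hR
  refine ⟨min ε1 ε2 / 2, by positivity, fun s hs => ?_⟩
  rcases lt_trichotomy s 0 with h | h | h
  · have : dist s 0 < ε1 := by
      rw [Real.dist_eq, sub_zero]
      exact lt_of_le_of_lt hs (by have := min_le_left ε1 ε2; linarith)
    exact (H1 this h).le
  · rw [h, h0]; exact bot_le
  · have : dist s 0 < ε2 := by
      rw [Real.dist_eq, sub_zero]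
      exact lt_of_le_of_lt hs (by have := min_le_right ε1 ε2; linarith)
    exact (H2 this h).le

lemma kernel_bdd {K : ℝ → EReal} (hK : IsKernel K) (h0 : K 0 = ⊥) :
    ∃ C : ℝ, 0 ≤ C ∧ ∀ s ∈ Icc (-1:ℝ) 1, K s ≤ (C : EReal) := by
  obtain ⟨η, hη, hsm⟩ := kernel_small hK h0 0
  set η' := min η (1/2) with hη'
  have hη'0 : 0 < η' := by positivity
  obtain ⟨C1, hC1⟩ := (isCompact_Icc (a := (-1:ℝ)) (b := -η')).exists_bound_of_continuousOn
    (hK.cont_left.mono (fun x hx => ⟨hx.1, lt_of_le_of_lt hx.2 (by linarith)⟩))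
  obtain ⟨C2, hC2⟩ := (isCompact_Icc (a := η') (b := (1:ℝ))).exists_bound_of_continuousOn
    (hK.cont_right.mono (fun x hx => ⟨lt_of_lt_of_le hη'0 hx.1, hx.2⟩))
  refine ⟨max 0 (max C1 C2), le_max_left _ _, fun s hs => ?_⟩
  rcases le_or_gt s (-η') with h | h
  · have hmem : s ∈ Ico (-1:ℝ) 0 := ⟨hs.1, lt_of_le_of_lt h (by linarith)⟩
    have hne : K s ≠ ⊥ := hK.finite_left s hmem
    rw [← EReal.coe_toReal (hK.ne_top s) hne]
    have h2 := hC1 s ⟨hs.1, h⟩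
    rw [Real.norm_eq_abs] at h2
    exact EReal.coe_le_coe_iff.2 (by
      have := le_of_abs_le h2
      calc (K s).toReal ≤ C1 := this
        _ ≤ max 0 (max C1 C2) := le_trans (le_max_left _ _) (le_max_right _ _))
  rcases lt_or_ge s η' with h2 | h2
  · have : K s ≤ ((0:ℝ) : EReal) := hsm s (by
      rw [abs_le]
      constructor
      · linarith [min_le_left η (1/2)]
      · linarith [min_le_left η (1/2)])
    exact this.trans (EReal.coe_le_coe_iff.2 (le_max_left _ _))
  · have hmem : s ∈ Ioc (0:ℝ) 1 := ⟨lt_of_lt_of_le hη'0 h2, hs.2⟩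
    have hne : K s ≠ ⊥ := hK.finite_right s hmem
    rw [← EReal.coe_toReal (hK.ne_top s) hne]
    have h3 := hC2 s ⟨h2, hs.2⟩
    rw [Real.norm_eq_abs] at h3
    exact EReal.coe_le_coe_iff.2 (by
      have := le_of_abs_le h3
      calc (K s).toReal ≤ C2 := this
        _ ≤ max 0 (max C1 C2) := le_trans (le_max_right _ _) (le_max_right _ _))

lemma SOT_repr {n : ℕ} {K : Fin n → ℝ → EReal} {J : ℝ → EReal}
    (hKt : ∀ i t, K i t ≠ ⊤) (hJt : ∀ t, J t ≠ ⊤) {x : Fin n → ℝ} {t : ℝ}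
    (hJb : J t ≠ ⊥) (hb : ∀ i, K i (t - x i) ≠ ⊥) :
    SOT K J x t = (((J t).toReal + ∑ i, toR (K i) (t - x i) : ℝ) : EReal) := by
  unfold SOT
  rw [EReal.coe_add, coe_fsum]
  congr 1
  · exact (EReal.coe_toReal (hJt t) hJb).symm
  · exact Finset.sum_congr rfl fun i _ => (EReal.coe_toReal (hKt i _) (hb i)).symm

lemma SOT_Jbot {n : ℕ} {K : Fin n → ℝ → EReal} {J : ℝ → EReal} {x : Fin n → ℝ} {t : ℝ}
    (h : J t = ⊥) : SOT K J x t = ⊥ := by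
  unfold SOT; rw [h, EReal.bot_add]

lemma SOT_Kbot {n : ℕ} {K : Fin n → ℝ → EReal} {J : ℝ → EReal} {x : Fin n → ℝ} {t : ℝ}
    (i0 : Fin n) (h : K i0 (t - x i0) = ⊥) : SOT K J x t = ⊥ := by
  classical
  have h2 : ∑ i, K i (t - x i) = ⊥ := by
    rw [← Finset.add_sum_erase _ _ (Finset.mem_univ i0), h, EReal.bot_add]
  unfold SOT; rw [h2, EReal.add_bot]

lemma SOT_le_of_bounds {n : ℕ} {K : Fin n → ℝ → EReal} {J : ℝ → EReal}
    {M : ℝ} {CK : Fin n → ℝ} (hM : ∀ t ∈ Icc (0:ℝ) 1, J t ≤ (M : EReal))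
    (hCK : ∀ i, ∀ s ∈ Icc (-1:ℝ) 1, K i s ≤ ((CK i : ℝ) : EReal))
    {x : Fin n → ℝ} (hx : ∀ i, x i ∈ Icc (0:ℝ) 1) {t : ℝ} (ht : t ∈ Icc (0:ℝ) 1) :
    SOT K J x t ≤ ((M + ∑ i, CK i : ℝ) : EReal) := by
  unfold SOT
  rw [EReal.coe_add, coe_fsum]
  refine add_le_add (hM t ht) (Finset.sum_le_sum fun i _ => hCK i _ ?_)
  obtain ⟨h1, h2⟩ := hx i
  exact ⟨by linarith [ht.1, ht.2], by linarith [ht.1, ht.2]⟩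

lemma SOT_small_term {n : ℕ} {K : Fin n → ℝ → EReal} {J : ℝ → EReal}
    {M : ℝ} {CK : Fin n → ℝ} (hM : ∀ t ∈ Icc (0:ℝ) 1, J t ≤ (M : EReal))
    (hCK : ∀ i, ∀ s ∈ Icc (-1:ℝ) 1, K i s ≤ ((CK i : ℝ) : EReal))
    {x : Fin n → ℝ} (hx : ∀ i, x i ∈ Icc (0:ℝ) 1) {t : ℝ} (ht : t ∈ Icc (0:ℝ) 1)
    (i0 : Fin n) {r : ℝ} (hr : K i0 (t - x i0) ≤ (r : EReal)) :
    SOT K J x t ≤ ((M + (r + ∑ i ∈ Finset.univ.erase i0, CK i) : ℝ) : EReal) := by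
  classical
  unfold SOT
  rw [EReal.coe_add, EReal.coe_add, coe_fsum]
  refine add_le_add (hM t ht) ?_
  rw [← Finset.add_sum_erase _ _ (Finset.mem_univ i0)]
  refine add_le_add hr (Finset.sum_le_sum fun i _ => hCK i _ ?_)
  obtain ⟨h1, h2⟩ := hx i
  exact ⟨by linarith [ht.1, ht.2], by linarith [ht.1, ht.2]⟩

end AuxLemmas

set_option maxHeartbeats 2000000 in
lemma part1_main {n : ℕ} (hn : 1 ≤ n) (K : Fin n → ℝ → EReal) (J : ℝ → EReal)
    (hK : ∀ i, IsKernel (K i)) (hsing : ∀ i, K i 0 = ⊥) (hJ : IsNField n J) :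
    ∀ y ∈ closedSimplex n, 0 < y ⟨0, hn⟩ → y ⟨n - 1, Nat.sub_lt hn Nat.zero_lt_one⟩ < 1 →
      ∀ j ≤ n, mj K J y j ≠ ⊥ →
        ∃ δ > (0:ℝ), ∃ L : ℝ, 0 ≤ L ∧
          ∀ x ∈ closedSimplex n, dist x y ≤ δ →
            (mj K J x j ≠ ⊥ ∧ mj K J x j ≠ ⊤) ∧
            ∀ z ∈ closedSimplex n, dist z y ≤ δ →
              |(mj K J x j).toReal - (mj K J z j).toReal| ≤ L * dist x z := by
  classical
  intro y hy hy0 hy1 j hj hmbot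
  haveI : Nonempty (Fin n) := ⟨⟨0, hn⟩⟩
  set i0 : Fin n := ⟨0, hn⟩ with hi0
  set iN : Fin n := ⟨n - 1, by omega⟩ with hiN
  set ymin := y i0 with hymin
  set ymax := y iN with hymax
  have hymin0 : 0 < ymin := hy0
  have hymax1 : ymax < 1 := hy1
  have hcoords : ∀ i, ymin ≤ y i ∧ y i ≤ ymax := by
    intro i
    constructor
    · exact hy.1 (by simp [hi0, Fin.le_def])
    · exact hy.1 (by simp [hiN, Fin.le_def]; omega)
  -- global bounds
  obtain ⟨M, hM⟩ := hJ.bdd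
  choose CK hCK0 hCK using fun i => kernel_bdd (hK i) (hsing i)
  set Ctot := M + ∑ i, CK i with hCtot
  have hIj01 : ∀ (x : Fin n → ℝ), (∀ i, x i ∈ Icc (0:ℝ) 1) → ∀ j' : ℕ,
      Ij x j' ⊆ Icc (0:ℝ) 1 := by
    intro x hx j'
    apply Icc_subset_Icc
    · unfold nodeLo; split
      · exact (hx _).1
      · exact le_refl 0
    · unfold nodeHi; split
      · exact (hx _).2
      · exact le_refl 1
  have htop : ∀ (x : Fin n → ℝ), (∀ i, x i ∈ Icc (0:ℝ) 1) → ∀ j' : ℕ,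
      mj K J x j' ≤ ((Ctot : ℝ) : EReal) := by
    intro x hx j'
    exact iSup₂_le fun t ht => SOT_le_of_bounds hM hCK hx (hIj01 x hx j' ht)
  have hmtop : mj K J y j ≠ ⊤ := by
    intro h
    have := htop y hy.2 j
    rw [h] at this
    exact (EReal.coe_ne_top Ctot) (top_le_iff.1 this)
  set m := (mj K J y j).toReal with hm
  have hmco : mj K J y j = (m : EReal) := (EReal.coe_toReal hmtop hmbot).symm
  -- pick a near-maximizer t*
  have hlt : ((m - 1 : ℝ) : EReal) < mj K J y j := by
    rw [hmco]; exact EReal.coe_lt_coe_iff.2 (by linarith)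
  have hlt2 := hlt
  unfold mj at hlt2
  rw [lt_iSup_iff] at hlt2
  obtain ⟨ts, hts⟩ := hlt2
  rw [lt_iSup_iff] at hts
  obtain ⟨hts_mem, hFs⟩ := hts
  have hFne_bot : SOT K J y ts ≠ ⊥ := by
    intro h; rw [h] at hFs; exact not_lt_bot hFs
  have hJts : J ts ≠ ⊥ := fun h => hFne_bot (SOT_Jbot h)
  have hKts : ∀ i, K i (ts - y i) ≠ ⊥ := fun i h => hFne_bot (SOT_Kbot i h)
  have htsne : ∀ i, ts ≠ y i := fun i h => hKts i (by rw [h, sub_self]; exact hsing i)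
  have hts01 : ts ∈ Icc (0:ℝ) 1 := hIj01 y hy.2 j hts_mem
  set ε := Finset.univ.inf' Finset.univ_nonempty (fun i => |ts - y i|) with hεdef
  have hε0 : 0 < ε := by
    rw [hεdef, Finset.lt_inf'_iff]
    intro i _
    exact abs_pos.2 (sub_ne_zero.2 (htsne i))
  have hεle : ∀ i, ε ≤ |ts - y i| := fun i => Finset.inf'_le _ (Finset.mem_univ i)
  -- smallness scale
  set Bre : Fin n → ℝ := fun i => M + ∑ i' ∈ Finset.univ.erase i, CK i' with hBre
  choose ηf hηf0 hηfs using fun i => kernel_small (hK i) (hsing i) (m - 2 - Bre i)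
  set η0 := Finset.univ.inf' Finset.univ_nonempty ηf with hη0def
  have hη00 : 0 < η0 := by
    rw [hη0def, Finset.lt_inf'_iff]; intro i _; exact hηf0 i
  set η := min η0 (1/2) with hηdef
  have hηpos : 0 < η := lt_min hη00 (by norm_num)
  have hηhalf : η ≤ 1/2 := min_le_right _ _
  have hsmall : ∀ x : Fin n → ℝ, (∀ i, x i ∈ Icc (0:ℝ) 1) → ∀ t ∈ Icc (0:ℝ) 1,
      ∀ i : Fin n, |t - x i| ≤ η → SOT K J x t ≤ ((m - 2 : ℝ) : EReal) := by
    intro x hx t ht i hti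
    have h1 : K i (t - x i) ≤ ((m - 2 - Bre i : ℝ) : EReal) :=
      hηfs i _ (le_trans hti (le_trans (min_le_left _ _)
        (Finset.inf'_le _ (Finset.mem_univ i))))
    have h2 := SOT_small_term hM hCK hx ht i h1
    refine h2.trans (le_of_eq (congrArg _ ?_))
    rw [hBre]; ring
  -- geometric scales
  set cl := ymin / 2 with hcl
  set cr := (1 - ymax) / 2 with hcr
  have hcl0 : 0 < cl := by rw [hcl]; linarith
  have hcr0 : 0 < cr := by rw [hcr]; linarith
  have hclh : cl < 1/2 := by
    rw [hcl]; have := (hcoords i0).2; have := hy.2 iN; linarith [hymax1, hymin0, (hy.2 i0).2]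
  have hcrh : cr ≤ 1/2 := by rw [hcr]; linarith [(hy.2 iN).1]
  set ρ := min (min ε η) (min cl cr) with hρ
  have hρ0 : 0 < ρ := lt_min (lt_min hε0 hηpos) (lt_min hcl0 hcr0)
  have hρε : ρ ≤ ε := le_trans (min_le_left _ _) (min_le_left _ _)
  have hρη : ρ ≤ η := le_trans (min_le_left _ _) (min_le_right _ _)
  set η2 := ρ / 2 with hη2
  have hη20 : 0 < η2 := by rw [hη2]; linarith
  have hη2q : η2 ≤ 1/4 := by
    rw [hη2]; have : ρ ≤ 1/2 := hρη.trans hηhalf; linarith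
  -- Lipschitz constants for the kernels away from 0
  have hconcL : ∀ i, ConcaveOn ℝ (Icc (-1:ℝ) (-η2/2)) (toR (K i)) := fun i =>
    (hK i).concave_left.subset
      (fun s hs => ⟨hs.1, lt_of_le_of_lt hs.2 (by linarith)⟩) (convex_Icc _ _)
  have hconcR : ∀ i, ConcaveOn ℝ (Icc (η2/2) 1) (toR (K i)) := fun i =>
    (hK i).concave_right.subset
      (fun s hs => ⟨lt_of_lt_of_le (by linarith) hs.1, hs.2⟩) (convex_Icc _ _)
  choose ΛL hΛL0 hΛL using fun i => concave_lipschitz (hconcL i)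
    (show (-1:ℝ) < -(1 - cr) by linarith)
    (show -(1 - cr) ≤ -η2 by linarith)
    (show -η2 < -η2/2 by linarith)
  choose ΛR hΛR0 hΛR using fun i => concave_lipschitz (hconcR i)
    (show η2/2 < η2 by linarith)
    (show η2 ≤ 1 - cl by linarith)
    (show 1 - cl < 1 by linarith)
  set Λf : Fin n → ℝ := fun i => max (ΛL i) (ΛR i) with hΛf
  set Λtot := ∑ i, Λf i with hΛtot
  have hΛf0 : ∀ i, 0 ≤ Λf i := fun i => le_trans (hΛL0 i) (le_max_left _ _)
  have hΛtot0 : 0 ≤ Λtot := Finset.sum_nonneg fun i _ => hΛf0 i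
  -- the neighborhood size
  set δ := min (min (ρ/4) (min cl cr)) (1/(2*(Λtot+1))) with hδ
  have hδ0 : 0 < δ := by
    apply lt_min (lt_min (by linarith) (lt_min hcl0 hcr0))
    positivity
  have hδρ : δ ≤ ρ/4 := le_trans (min_le_left _ _) (min_le_left _ _)
  have hδcl : δ ≤ cl := le_trans (min_le_left _ _) (le_trans (min_le_right _ _) (min_le_left _ _))
  have hδcr : δ ≤ cr := le_trans (min_le_left _ _) (le_trans (min_le_right _ _) (min_le_right _ _))
  have hΛδ : Λtot * δ ≤ 1/2 := by
    have h1 : δ ≤ 1/(2*(Λtot+1)) := min_le_right _ _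
    have h2 : Λtot * δ ≤ Λtot * (1/(2*(Λtot+1))) := mul_le_mul_of_nonneg_left h1 hΛtot0
    refine h2.trans ?_
    rw [mul_one_div, div_le_div_iff₀ (by positivity) (by norm_num)]
    linarith
  -- the difference estimate
  have hdiff : ∀ x z : Fin n → ℝ, (∀ i, x i ∈ Icc cl (1-cr)) → (∀ i, z i ∈ Icc cl (1-cr)) →
      ∀ t ∈ Icc (0:ℝ) 1,
      (∀ i, (η2 ≤ t - x i ∧ η2 ≤ t - z i) ∨ (t - x i ≤ -η2 ∧ t - z i ≤ -η2)) →
      |(∑ i, toR (K i) (t - x i)) - ∑ i, toR (K i) (t - z i)| ≤ Λtot * dist x z := by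
    intro x z hx hz t ht hsign
    rw [← Finset.sum_sub_distrib]
    refine (Finset.abs_sum_le_sum_abs _ _).trans ?_
    rw [hΛtot, Finset.sum_mul]
    refine Finset.sum_le_sum fun i _ => ?_
    have hdle : |(t - x i) - (t - z i)| ≤ dist x z := by
      have h1 : dist (z i) (x i) ≤ dist z x := dist_le_pi_dist z x i
      rw [Real.dist_eq, dist_comm z x] at h1
      rw [show (t - x i) - (t - z i) = z i - x i by ring]
      exact h1
    rcases hsign i with ⟨h1, h2⟩ | ⟨h1, h2⟩
    · have hb1 : t - x i ∈ Icc η2 (1 - cl) := ⟨h1, by linarith [(hx i).1, ht.2]⟩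
      have hb2 : t - z i ∈ Icc η2 (1 - cl) := ⟨h2, by linarith [(hz i).1, ht.2]⟩
      refine (hΛR i _ hb1 _ hb2).trans ?_
      exact mul_le_mul (le_max_right _ _) hdle (abs_nonneg _) (hΛf0 i)
    · have hb1 : t - x i ∈ Icc (-(1-cr)) (-η2) := ⟨by linarith [(hx i).2, ht.1], h1⟩
      have hb2 : t - z i ∈ Icc (-(1-cr)) (-η2) := ⟨by linarith [(hz i).2, ht.1], h2⟩
      refine (hΛL i _ hb1 _ hb2).trans ?_
      exact mul_le_mul (le_max_left _ _) hdle (abs_nonneg _) (hΛf0 i)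
  -- coordinates of nearby simplex points
  have hxcoord : ∀ x : Fin n → ℝ, x ∈ closedSimplex n → dist x y ≤ δ →
      ∀ i, |x i - y i| ≤ δ ∧ x i ∈ Icc cl (1-cr) := by
    intro x hx hxd i
    have h1 : dist (x i) (y i) ≤ dist x y := dist_le_pi_dist x y i
    rw [Real.dist_eq] at h1
    have h2 : |x i - y i| ≤ δ := h1.trans hxd
    obtain ⟨h3, h4⟩ := hcoords i
    obtain ⟨h5, h6⟩ := abs_le.1 h2
    refine ⟨h2, ⟨?_, ?_⟩⟩
    · rw [hcl] at *; linarith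
    · rw [hcr] at *; linarith
  have hycoord : ∀ i, y i ∈ Icc cl (1-cr) := by
    intro i
    obtain ⟨h3, h4⟩ := hcoords i
    exact ⟨by rw [hcl]; linarith, by rw [hcr]; linarith⟩
  -- signs at ts
  have hsign_ts : ∀ x : Fin n → ℝ, (∀ i, |x i - y i| ≤ δ) →
      ∀ i, (η2 ≤ ts - x i ∧ η2 ≤ ts - y i) ∨ (ts - x i ≤ -η2 ∧ ts - y i ≤ -η2) := by
    intro x hxd i
    have h1 := hεle i
    obtain ⟨h5, h6⟩ := abs_le.1 (hxd i)
    rcases le_or_gt (y i) ts with h | h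
    · left
      have h2 : ε ≤ ts - y i := by rwa [abs_of_nonneg (by linarith)] at h1
      constructor <;> [skip; linarith]
      have : ts - x i = (ts - y i) + (y i - x i) := by ring
      rw [hη2]; linarith
    · right
      have h2 : ε ≤ y i - ts := by
        rw [abs_sub_comm] at h1
        rwa [abs_of_nonneg (by linarith)] at h1
      constructor
      · rw [hη2]; linarith
      · rw [hη2]; linarith
  -- ts belongs to nearby intervals and gives a lower bound for mj
  have hC1 : ∀ x, x ∈ closedSimplex n → dist x y ≤ δ →
      ((m - 3/2 : ℝ) : EReal) ≤ mj K J x j := by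
    intro x hx hxd
    have hxc := hxcoord x hx hxd
    have hsign := hsign_ts x (fun i => (hxc i).1)
    have htsIx : ts ∈ Ij x j := by
      constructor
      · by_cases hcase : 0 < j ∧ j ≤ n
        · have heq : nodeLo x j = x ⟨j - 1, by omega⟩ := dif_pos hcase
          have heqy : nodeLo y j = y ⟨j - 1, by omega⟩ := dif_pos hcase
          rw [heq]
          set i' : Fin n := ⟨j - 1, by omega⟩
          have h1 : y i' ≤ ts := by
            have := hts_mem.1; rw [heqy] at this; exact this
          have h2 : ε ≤ ts - y i' := by
            have := hεle i'; rwa [abs_of_nonneg (by linarith)] at this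
          obtain ⟨h5, h6⟩ := abs_le.1 ((hxc i').1)
          linarith
        · have heq : nodeLo x j = 0 := dif_neg hcase
          rw [heq]; exact hts01.1
      · by_cases hcase : j < n
        · have heq : nodeHi x j = x ⟨j, hcase⟩ := dif_pos hcase
          have heqy : nodeHi y j = y ⟨j, hcase⟩ := dif_pos hcase
          rw [heq]
          set i' : Fin n := ⟨j, hcase⟩
          have h1 : ts ≤ y i' := by
            have := hts_mem.2; rw [heqy] at this; exact this
          have h2 : ε ≤ y i' - ts := by
            have := hεle i'; rw [abs_sub_comm] at this
            rwa [abs_of_nonneg (by linarith)] at this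
          obtain ⟨h5, h6⟩ := abs_le.1 ((hxc i').1)
          linarith
        · have heq : nodeHi x j = 1 := dif_neg hcase
          rw [heq]; exact hts01.2
    have hKx : ∀ i, K i (ts - x i) ≠ ⊥ := by
      intro i
      rcases hsign i with ⟨h1, h2⟩ | ⟨h1, h2⟩
      · exact (hK i).finite_right _ ⟨by linarith,
          by linarith [((hxc i).2).1, hts01.2]⟩
      · exact (hK i).finite_left _ ⟨by linarith [((hxc i).2).2, hts01.1], by linarith⟩
    have hrx := SOT_repr (fun i => (hK i).ne_top) hJ.ne_top hJts hKx (x := x) (t := ts)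
    have hry := SOT_repr (fun i => (hK i).ne_top) hJ.ne_top hJts hKts (x := y) (t := ts)
    have hdd := hdiff x y (fun i => (hxc i).2) hycoord ts hts01 hsign
    rw [hry] at hFs
    have hFs' : m - 1 < (J ts).toReal + ∑ i, toR (K i) (ts - y i) :=
      EReal.coe_lt_coe_iff.1 hFs
    have hΛd : Λtot * dist x y ≤ 1/2 :=
      le_trans (mul_le_mul_of_nonneg_left hxd hΛtot0) hΛδ
    obtain ⟨ha1, ha2⟩ := abs_le.1 hdd
    have hval : m - 3/2 ≤ (J ts).toReal + ∑ i, toR (K i) (ts - x i) := by linarith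
    calc ((m - 3/2 : ℝ) : EReal) ≤ SOT K J x ts := by
          rw [hrx]; exact EReal.coe_le_coe_iff.2 hval
      _ ≤ mj K J x j := le_iSup₂ (f := fun t (_ : t ∈ Ij x j) => SOT K J x t) ts htsIx
  -- the one-sided comparison
  have hC2 : ∀ x z, x ∈ closedSimplex n → dist x y ≤ δ → z ∈ closedSimplex n → dist z y ≤ δ →
      (mj K J x j).toReal ≤ (mj K J z j).toReal + Λtot * dist x z := by
    intro x z hx hxd hz hzd
    have hmx32 := hC1 x hx hxd
    have hmz32 := hC1 z hz hzd
    have hmxbot : mj K J x j ≠ ⊥ := fun h => by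
      rw [h] at hmx32; exact (EReal.bot_lt_coe (m - 3/2)).not_ge hmx32
    have hmzbot : mj K J z j ≠ ⊥ := fun h => by
      rw [h] at hmz32; exact (EReal.bot_lt_coe (m - 3/2)).not_ge hmz32
    have hmxtop : mj K J x j ≠ ⊤ := fun h => by
      have := htop x hx.2 j; rw [h] at this
      exact (EReal.coe_ne_top Ctot) (top_le_iff.1 this)
    have hmztop : mj K J z j ≠ ⊤ := fun h => by
      have := htop z hz.2 j; rw [h] at this
      exact (EReal.coe_ne_top Ctot) (top_le_iff.1 this)
    set mx := (mj K J x j).toReal with hmxdef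
    set mz := (mj K J z j).toReal with hmzdef
    have hmxco : mj K J x j = (mx : EReal) := (EReal.coe_toReal hmxtop hmxbot).symm
    have hmzco : mj K J z j = (mz : EReal) := (EReal.coe_toReal hmztop hmzbot).symm
    have hmz32' : m - 3/2 ≤ mz := by
      rw [hmzco] at hmz32; exact EReal.coe_le_coe_iff.1 hmz32
    have hxc := hxcoord x hx hxd
    have hzc := hxcoord z hz hzd
    have key : ∀ t ∈ Ij x j, SOT K J x t ≤ ((mz + Λtot * dist x z : ℝ) : EReal) := by
      intro t htI
      have hΛdz : 0 ≤ Λtot * dist x z := mul_nonneg hΛtot0 dist_nonneg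
      rcases le_or_gt (SOT K J x t) ((m - 2 : ℝ) : EReal) with hle | hgt
      · exact hle.trans (EReal.coe_le_coe_iff.2 (by linarith))
      · have ht01 : t ∈ Icc (0:ℝ) 1 := hIj01 x hx.2 j htI
        have hfar : ∀ i, η < |t - x i| := by
          intro i
          by_contra hcon
          push_neg at hcon
          exact absurd (hsmall x hx.2 t ht01 i hcon) (not_le.2 hgt)
        have hSne : SOT K J x t ≠ ⊥ := by
          intro h; rw [h] at hgt; exact not_lt_bot hgt
        have hJt : J t ≠ ⊥ := fun h => hSne (SOT_Jbot h)
        have hKxt : ∀ i, K i (t - x i) ≠ ⊥ := fun i h => hSne (SOT_Kbot i h)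
        have hxz : ∀ i, |x i - z i| ≤ 2*δ := by
          intro i
          have h1 := (hxc i).1
          have h2 := (hzc i).1
          calc |x i - z i| ≤ |x i - y i| + |y i - z i| := abs_sub_le _ _ _
            _ ≤ 2*δ := by rw [abs_sub_comm (y i) (z i)]; linarith
        have hsign : ∀ i, (η2 ≤ t - x i ∧ η2 ≤ t - z i) ∨
            (t - x i ≤ -η2 ∧ t - z i ≤ -η2) := by
          intro i
          have hf := hfar i
          obtain ⟨hd1, hd2⟩ := abs_le.1 (hxz i)
          rcases le_or_gt (x i) t with h | h
          · left
            have h2 : η < t - x i := by rwa [abs_of_nonneg (by linarith)] at hf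
            constructor
            · rw [hη2]; linarith
            · rw [hη2]; linarith
          · right
            have h2 : η < x i - t := by
              rw [abs_sub_comm] at hf
              rwa [abs_of_nonneg (by linarith)] at hf
            constructor
            · rw [hη2]; linarith
            · rw [hη2]; linarith
        have htIz : t ∈ Ij z j := by
          constructor
          · by_cases hcase : 0 < j ∧ j ≤ n
            · have heq : nodeLo z j = z ⟨j - 1, by omega⟩ := dif_pos hcase
              have heqx : nodeLo x j = x ⟨j - 1, by omega⟩ := dif_pos hcase
              rw [heq]
              set i' : Fin n := ⟨j - 1, by omega⟩
              have h1 : x i' ≤ t := by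
                have := htI.1; rw [heqx] at this; exact this
              have h2 : η < t - x i' := by
                have := hfar i'; rwa [abs_of_nonneg (by linarith)] at this
              obtain ⟨hd1, hd2⟩ := abs_le.1 (hxz i')
              linarith
            · have heq : nodeLo z j = 0 := dif_neg hcase
              rw [heq]; exact ht01.1
          · by_cases hcase : j < n
            · have heq : nodeHi z j = z ⟨j, hcase⟩ := dif_pos hcase
              have heqx : nodeHi x j = x ⟨j, hcase⟩ := dif_pos hcase
              rw [heq]
              set i' : Fin n := ⟨j, hcase⟩
              have h1 : t ≤ x i' := by
                have := htI.2; rw [heqx] at this; exact this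
              have h2 : η < x i' - t := by
                have := hfar i'; rw [abs_sub_comm] at this
                rwa [abs_of_nonneg (by linarith)] at this
              obtain ⟨hd1, hd2⟩ := abs_le.1 (hxz i')
              linarith
            · have heq : nodeHi z j = 1 := dif_neg hcase
              rw [heq]; exact ht01.2
        have hKzt : ∀ i, K i (t - z i) ≠ ⊥ := by
          intro i
          rcases hsign i with ⟨h1, h2⟩ | ⟨h1, h2⟩
          · exact (hK i).finite_right _ ⟨by linarith,
              by linarith [((hzc i).2).1, ht01.2]⟩
          · exact (hK i).finite_left _ ⟨by linarith [((hzc i).2).2, ht01.1], by linarith⟩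
        have hrx := SOT_repr (fun i => (hK i).ne_top) hJ.ne_top hJt hKxt (x := x) (t := t)
        have hrz := SOT_repr (fun i => (hK i).ne_top) hJ.ne_top hJt hKzt (x := z) (t := t)
        have hdd := hdiff x z (fun i => (hxc i).2) (fun i => (hzc i).2) t ht01 hsign
        have h5 : SOT K J z t ≤ (mz : EReal) := by
          rw [← hmzco]
          exact le_iSup₂ (f := fun t (_ : t ∈ Ij z j) => SOT K J z t) t htIz
        rw [hrz] at h5
        have h5' := EReal.coe_le_coe_iff.1 h5
        rw [hrx]
        apply EReal.coe_le_coe_iff.2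
        obtain ⟨ha1, ha2⟩ := abs_le.1 hdd
        linarith
    have hle : mj K J x j ≤ ((mz + Λtot * dist x z : ℝ) : EReal) := iSup₂_le key
    rw [hmxco] at hle
    exact EReal.coe_le_coe_iff.1 hle
  -- conclusion
  refine ⟨δ, hδ0, Λtot, hΛtot0, fun x hx hxd => ⟨⟨?_, ?_⟩, fun z hz hzd => ?_⟩⟩
  · intro h
    have := hC1 x hx hxd
    rw [h] at this
    exact (EReal.bot_lt_coe (m - 3/2)).not_ge this
  · intro h
    have := htop x hx.2 j
    rw [h] at this
    exact (EReal.coe_ne_top Ctot) (top_le_iff.1 this)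
  · have h1 := hC2 x z hx hxd hz hzd
    have h2 := hC2 z x hz hzd hx hxd
    rw [dist_comm z x] at h2
    rw [abs_sub_le_iff]
    exact ⟨by linarith, by linarith⟩

/-- (Proposition 5.1 / `prop:Lipschitz`.) For singular kernels and an
arbitrary `n`-field function: if `y ∈ S̄` has all coordinates in `(0,1)` and
`m_j(y) ≠ -∞`, then `m_j` is finite-valued and Lipschitz continuous on a suitable relative
neighborhood of `y` in `S̄`; in particular `m = (m_0,…,m_n)` is locally Lipschitz on the
regularity set `Y`. -/
theorem interval_maxima_locally_Lipschitz
    {n : ℕ} (hn : 1 ≤ n) (K : Fin n → ℝ → EReal) (J : ℝ → EReal)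
    (hK : ∀ i, IsKernel (K i)) (hsing : ∀ i, K i 0 = ⊥) (hJ : IsNField n J) :
    (∀ y ∈ closedSimplex n, 0 < y ⟨0, by omega⟩ → y ⟨n - 1, by omega⟩ < 1 →
      ∀ j ≤ n, mj K J y j ≠ ⊥ →
        ∃ δ > (0:ℝ), ∃ L : ℝ,
          ∀ x ∈ closedSimplex n, dist x y ≤ δ →
            (mj K J x j ≠ ⊥ ∧ mj K J x j ≠ ⊤) ∧
            ∀ z ∈ closedSimplex n, dist z y ≤ δ →
              |(mj K J x j).toReal - (mj K J z j).toReal| ≤ L * dist x z) ∧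
    (∀ y ∈ regSet K J, ∃ δ > (0:ℝ), ∃ L : ℝ,
        ∀ x ∈ regSet K J, dist x y ≤ δ → ∀ z ∈ regSet K J, dist z y ≤ δ →
          ∀ j ≤ n, |(mj K J x j).toReal - (mj K J z j).toReal| ≤ L * dist x z) := by
  constructor
  · intro y hy hy0 hy1 j hj hmbot
    obtain ⟨δ, hδ, L, _, hL⟩ := part1_main hn K J hK hsing hJ y hy hy0 hy1 j hj hmbot
    exact ⟨δ, hδ, L, hL⟩
  · intro y hy
    haveI : Nonempty (Fin (n+1)) := ⟨0⟩
    have hOS : y ∈ openSimplex n := hy.1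
    have hreg : ∀ j ≤ n, mj K J y j ≠ ⊥ := hy.2
    have hyc : y ∈ closedSimplex n :=
      ⟨hOS.1.monotone, fun i => ⟨(hOS.2 i).1.le, (hOS.2 i).2.le⟩⟩
    have H : ∀ jj : Fin (n+1), ∃ δ > (0:ℝ), ∃ L : ℝ, 0 ≤ L ∧
        ∀ x ∈ closedSimplex n, dist x y ≤ δ →
          (mj K J x (jj:ℕ) ≠ ⊥ ∧ mj K J x (jj:ℕ) ≠ ⊤) ∧
          ∀ z ∈ closedSimplex n, dist z y ≤ δ →
            |(mj K J x (jj:ℕ)).toReal - (mj K J z (jj:ℕ)).toReal| ≤ L * dist x z :=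
      fun jj => part1_main hn K J hK hsing hJ y hyc
        (hOS.2 ⟨0, by omega⟩).1 (hOS.2 ⟨n - 1, by omega⟩).2
        (jj:ℕ) (Nat.lt_succ_iff.mp jj.isLt) (hreg (jj:ℕ) (Nat.lt_succ_iff.mp jj.isLt))
    choose δf hδf Lf hLf0 hLf using H
    refine ⟨Finset.univ.inf' Finset.univ_nonempty δf, ?_,
      Finset.univ.sup' Finset.univ_nonempty Lf, ?_⟩
    · show (0:ℝ) < Finset.univ.inf' Finset.univ_nonempty δf
      rw [Finset.lt_inf'_iff]; intro i _; exact hδf i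
    · intro x hx hxd z hz hzd j hj
      have hxc : x ∈ closedSimplex n :=
        ⟨hx.1.1.monotone, fun i => ⟨(hx.1.2 i).1.le, (hx.1.2 i).2.le⟩⟩
      have hzc : z ∈ closedSimplex n :=
        ⟨hz.1.1.monotone, fun i => ⟨(hz.1.2 i).1.le, (hz.1.2 i).2.le⟩⟩
      set jj : Fin (n+1) := ⟨j, by omega⟩ with hjj
      have h1 := (hLf jj x hxc
        (hxd.trans (Finset.inf'_le _ (Finset.mem_univ jj)))).2 z hzc
        (hzd.trans (Finset.inf'_le _ (Finset.mem_univ jj)))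
      refine h1.trans ?_
      exact mul_le_mul_of_nonneg_right (Finset.le_sup' Lf (Finset.mem_univ jj)) dist_nonneg

end
end

section
/- Suppose the kernel functions K_1,…,K_n are singular and J is an arbitrary n-field function. Let y ∈ S and j ∈ {0,1,…,n} with m_j(y) ≠ -∞. Let q > 0, η > 0 and Z ⊆ I_j(y) be such that for every x ∈ S̄ with ‖x - y‖ ≤ η: (i) Z ⊆ I_j(x) and |t - x_i| ≥ η for all t ∈ Z and i = 1,…,n; (ii) m_j(x) = sup_{t ∈ Z} F(x,t); (iii) F(x,t) ≥ m_j(x) - q for all t ∈ Z (such q, η, Z exist by the Z-q lemma). Set z_* := inf Z and z^* := sup Z. Then for every i = 1,…,n, denoting by e_i the i-th standard basis vector of ℝ^n: -D₋K_i(z_* - y_i) ≤ liminf_{h↓0} (m_j(y + h e_i) - m_j(y))/h ≤ limsup_{h↓0} (m_j(y + h e_i) - m_j(y))/h ≤ -D₋K_i(z^* - y_i), and -D₊K_i(z_* - y_i) ≤ liminf_{h↓0} (m_j(y - h e_i) - m_j(y))/(-h) ≤ limsup_{h↓0} (m_j(y - h e_i) - m_j(y))/(-h) ≤ -D₊K_i(z^*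 - y_i). -/
open Set Filter
open scoped BigOperators Topology

noncomputable section

lemma concave_slope_shift_pos {C : Set ℝ} {g : ℝ → ℝ} (hg : ConcaveOn ℝ C g)
    {a c w : ℝ} (hw : 0 < w) (hac : a ≤ c)
    (ha : a ∈ C) (haw : a + w ∈ C) (hc : c ∈ C) (hcw : c + w ∈ C) :
    slope g c (c + w) ≤ slope g a (a + w) := by
  rcases eq_or_lt_of_le hac with rfl | hlt
  · exact le_refl _
  · have h1 : slope g a (c + w) ≤ slope g a (a + w) :=
      (hg.slope_anti ha)
        ⟨haw, by simp only [mem_singleton_iff]; intro h; linarith⟩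
        ⟨hcw, by simp only [mem_singleton_iff]; intro h; linarith⟩ (by linarith)
    have h2 : slope g c (c + w) ≤ slope g a (c + w) := by
      have := (hg.slope_anti hcw)
        ⟨ha, by simp only [mem_singleton_iff]; intro h; linarith⟩
        ⟨hc, by simp only [mem_singleton_iff]; intro h; linarith⟩ hac
      rw [slope_comm g (c+w) a, slope_comm g (c+w) c] at this
      exact this
    linarith

lemma concave_slope_shift {C : Set ℝ} {g : ℝ → ℝ} (hg : ConcaveOn ℝ C g)
    {a c w : ℝ} (hw : w ≠ 0) (hac : a ≤ c)
    (ha : a ∈ C) (haw : a + w ∈ C) (hc : c ∈ C) (hcw : c + w ∈ C) :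
    slope g c (c + w) ≤ slope g a (a + w) := by
  rcases hw.lt_or_gt with hneg | hpos
  · have := concave_slope_shift_pos hg (a := a + w) (c := c + w) (w := -w)
      (by linarith) (by linarith) haw (by simpa using ha) hcw (by simpa using hc)
    simpa [slope_comm] using this
  · exact concave_slope_shift_pos hg hpos hac ha haw hc hcw

lemma concave_tendsto_slope_Dm {C : Set ℝ} {g : ℝ → ℝ} (hg : ConcaveOn ℝ C g)
    {l a r : ℝ} (hl : l < a) (hr : a < r) (hC : Icc l r ⊆ C) :
    Tendsto (fun h : ℝ => slope g a (a - h)) (𝓝[>] (0:ℝ)) (𝓝 (Dm g a)) := by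
  have ha : a ∈ C := hC ⟨hl.le, hr.le⟩
  have hrC : r ∈ C := hC ⟨(hl.trans hr).le, le_refl r⟩
  have hanti : AntitoneOn (slope g a) (C \ {a}) := hg.slope_anti ha
  have hsub : Ioo l a ⊆ C \ {a} := fun x hx =>
    ⟨hC ⟨hx.1.le, hx.2.le.trans hr.le⟩, by simp only [mem_singleton_iff]; exact hx.2.ne⟩
  have hbdd : BddBelow (slope g a '' Ioo l a) := by
    refine ⟨slope g a r, ?_⟩
    rintro v ⟨x, hx, rfl⟩
    exact hanti (hsub hx)
      ⟨hrC, by simp only [mem_singleton_iff]; exact hr.ne'⟩ (hx.2.le.trans hr.le)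
  have htend : Tendsto (slope g a) (𝓝[<] a) (𝓝 (sInf (slope g a '' Ioo l a))) :=
    AntitoneOn.tendsto_nhdsWithin_Ioo_left ⟨(l+a)/2, by constructor <;> [skip; skip] <;> linarith⟩
      (hanti.mono hsub) hbdd
  set L := sInf (slope g a '' Ioo l a) with hL
  have hderiv : HasDerivWithinAt g L (Iio a) a := by
    rw [hasDerivWithinAt_iff_tendsto_slope]
    have : Iio a \ {a} = Iio a := by simp
    rw [this]
    exact htend
  have hDm : Dm g a = L := hderiv.derivWithin (uniqueDiffWithinAt_Iio a)
  rw [hDm]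
  have hmap : Tendsto (fun h : ℝ => a - h) (𝓝[>] (0:ℝ)) (𝓝[<] a) := by
    apply tendsto_nhdsWithin_of_tendsto_nhds_of_eventually_within _
    · have : Tendsto (fun h : ℝ => a - h) (𝓝 (0:ℝ)) (𝓝 (a - 0)) :=
        (continuous_const.sub continuous_id).tendsto 0
      simpa using this.mono_left nhdsWithin_le_nhds
    · filter_upwards [self_mem_nhdsWithin] with h (hh : 0 < h)
      simp only [mem_Iio]; linarith
  exact htend.comp hmap

lemma concave_tendsto_slope_Dp {C : Set ℝ} {g : ℝ → ℝ} (hg : ConcaveOn ℝ C g)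
    {l a r : ℝ} (hl : l < a) (hr : a < r) (hC : Icc l r ⊆ C) :
    Tendsto (fun h : ℝ => slope g a (a + h)) (𝓝[>] (0:ℝ)) (𝓝 (Dp g a)) := by
  have ha : a ∈ C := hC ⟨hl.le, hr.le⟩
  have hlC : l ∈ C := hC ⟨le_refl l, (hl.trans hr).le⟩
  have hanti : AntitoneOn (slope g a) (C \ {a}) := hg.slope_anti ha
  have hsub : Ioo a r ⊆ C \ {a} := fun x hx =>
    ⟨hC ⟨hl.le.trans hx.1.le, hx.2.le⟩, by simp only [mem_singleton_iff]; exact hx.1.ne'⟩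
  have hbdd : BddAbove (slope g a '' Ioo a r) := by
    refine ⟨slope g a l, ?_⟩
    rintro v ⟨x, hx, rfl⟩
    exact hanti ⟨hlC, by simp only [mem_singleton_iff]; exact hl.ne⟩
      (hsub hx) (hl.le.trans hx.1.le)
  have htend : Tendsto (slope g a) (𝓝[>] a) (𝓝 (sSup (slope g a '' Ioo a r))) :=
    AntitoneOn.tendsto_nhdsWithin_Ioo_right ⟨(a+r)/2, by constructor <;> linarith⟩
      (hanti.mono hsub) hbdd
  set L := sSup (slope g a '' Ioo a r) with hL
  have hderiv : HasDerivWithinAt g L (Ioi a) a := by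
    rw [hasDerivWithinAt_iff_tendsto_slope]
    have : Ioi a \ {a} = Ioi a := by simp
    rw [this]
    exact htend
  have hDp : Dp g a = L := hderiv.derivWithin (uniqueDiffWithinAt_Ioi a)
  rw [hDp]
  have hmap : Tendsto (fun h : ℝ => a + h) (𝓝[>] (0:ℝ)) (𝓝[>] a) := by
    apply tendsto_nhdsWithin_of_tendsto_nhds_of_eventually_within _
    · have : Tendsto (fun h : ℝ => a + h) (𝓝 (0:ℝ)) (𝓝 (a + 0)) :=
        (continuous_const.add continuous_id).tendsto 0
      simpa using this.mono_left nhdsWithin_le_nhds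
    · filter_upwards [self_mem_nhdsWithin] with h (hh : 0 < h)
      simp only [mem_Ioi]; linarith
  exact htend.comp hmap

lemma SOT_ne_top {n : ℕ} (K : Fin n → ℝ → EReal) (J : ℝ → EReal)
    (hKtop : ∀ k t, K k t ≠ ⊤) (hJtop : ∀ t, J t ≠ ⊤) (x : Fin n → ℝ) (t : ℝ) :
    SOT K J x t ≠ ⊤ := by
  have hs : ∑ k, K k (t - x k) ≠ ⊤ := by
    refine Finset.sum_induction _ (fun a => a ≠ ⊤) (fun a b ha hb => ?_) (by simp) ?_
    · exact (EReal.add_lt_top ha hb).ne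
    · exact fun k _ => hKtop k _
  exact (EReal.add_lt_top (hJtop t) hs).ne

lemma key_sandwich {n : ℕ} (K : Fin n → ℝ → EReal) (J : ℝ → EReal)
    (hKtop : ∀ k t, K k t ≠ ⊤) (hJtop : ∀ t, J t ≠ ⊤)
    (y x : Fin n → ℝ) (i : Fin n) (Z : Set ℝ) (hZne : Z.Nonempty)
    (hZbb : BddBelow Z) (hZba : BddAbove Z)
    (q : ℝ) (A B : EReal)
    (hxk : ∀ k, k ≠ i → x k = y k)
    (hrepy : A = ⨆ t ∈ Z, SOT K J y t) (hrepx : B = ⨆ t ∈ Z, SOT K J x t)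
    (hqy : ∀ t ∈ Z, A - (q : EReal) ≤ SOT K J y t)
    (hqx : ∀ t ∈ Z, B - (q : EReal) ≤ SOT K J x t)
    (hAbot : A ≠ ⊥)
    {C : Set ℝ} (hg : ConcaveOn ℝ C (toR (K i)))
    (hCcoe : ∀ u ∈ C, K i u = ((toR (K i)) u : EReal))
    {e : ℝ} (he : e ≠ 0) (hxi : x i = y i + e)
    (hmemZ : ∀ t ∈ Z, (t - y i) ∈ C ∧ (t - y i - e) ∈ C)
    (ha : (sInf Z - y i) ∈ C) (hae : (sInf Z - y i - e) ∈ C)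
    (hb : (sSup Z - y i) ∈ C) (hbe : (sSup Z - y i - e) ∈ C) :
    B ≠ ⊥ ∧ B ≠ ⊤ ∧
    -(slope (toR (K i)) (sInf Z - y i) (sInf Z - y i - e)) ≤ (B.toReal - A.toReal) / e ∧
    (B.toReal - A.toReal) / e ≤ -(slope (toR (K i)) (sSup Z - y i) (sSup Z - y i - e)) := by
  set g := toR (K i) with hgdef
  set w := -e with hwdef
  have hw : w ≠ 0 := by simpa [hwdef] using he
  set a₀ := sInf Z - y i with ha₀
  set b₀ := sSup Z - y i with hb₀
  have hxit : ∀ t : ℝ, t - x i = t - y i + w := by intro t; rw [hxi]; ring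
  have hab : a₀ ≤ b₀ := by
    have := csInf_le_csSup hZne hZbb hZba; simp only [ha₀, hb₀]; linarith
  -- the residual function
  set R : ℝ → EReal := fun t => J t + ∑ k ∈ Finset.univ.erase i, K k (t - y k) with hR
  have hsplity : ∀ t, SOT K J y t = R t + K i (t - y i) := by
    intro t
    simp only [hR]
    unfold SOT
    rw [← Finset.add_sum_erase _ (fun k => K k (t - y k)) (Finset.mem_univ i),
      add_comm (K i (t - y i)), ← add_assoc]
  have hsplitx : ∀ t, SOT K J x t = R t + K i (t - x i) := by
    intro t
    simp only [hR]
    unfold SOT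
    have hsum : ∑ k ∈ Finset.univ.erase i, K k (t - x k)
        = ∑ k ∈ Finset.univ.erase i, K k (t - y k) := by
      refine Finset.sum_congr rfl fun k hk => ?_
      rw [hxk k (Finset.ne_of_mem_erase hk)]
    rw [← Finset.add_sum_erase _ (fun k => K k (t - x k)) (Finset.mem_univ i), hsum,
      add_comm (K i (t - x i)), ← add_assoc]
  -- slopes
  set SA := slope g a₀ (a₀ - e) with hSA
  set SB := slope g b₀ (b₀ - e) with hSB
  have hsub_add : ∀ u : ℝ, u - e = u + w := by intro u; rw [hwdef]; ring
  have hSBA : SB ≤ SA := by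
    rw [hSA, hSB, hsub_add a₀, hsub_add b₀]
    exact concave_slope_shift hg hw hab ha (by rw [← hsub_add]; exact hae) hb
      (by rw [← hsub_add]; exact hbe)
  have hs : ∀ t ∈ Z, SB ≤ slope g (t - y i) (t - y i + w)
      ∧ slope g (t - y i) (t - y i + w) ≤ SA := by
    intro t ht
    obtain ⟨hu, huw⟩ := hmemZ t ht
    rw [hsub_add (t - y i)] at huw
    have h1 : a₀ ≤ t - y i := by
      have := csInf_le hZbb ht; simp only [ha₀]; linarith
    have h2 : t - y i ≤ b₀ := by
      have := le_csSup hZba ht; simp only [hb₀]; linarith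
    constructor
    · rw [hSB, hsub_add b₀]
      exact concave_slope_shift hg hw h2 hu huw hb (by rw [← hsub_add]; exact hbe)
    · rw [hSA, hsub_add a₀]
      exact concave_slope_shift hg hw h1 ha (by rw [← hsub_add]; exact hae) hu huw
  set cLo := min (w * SA) (w * SB) with hcLo
  set cHi := max (w * SA) (w * SB) with hcHi
  have hc : ∀ t ∈ Z, cLo ≤ g (t - y i + w) - g (t - y i)
      ∧ g (t - y i + w) - g (t - y i) ≤ cHi := by
    intro t ht
    obtain ⟨hs1, hs2⟩ := hs t ht
    have hslope : g (t - y i + w) - g (t - y i)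
        = w * slope g (t - y i) (t - y i + w) := by
      rw [slope_def_field, show t - y i + w - (t - y i) = w by ring]
      field_simp
    rcases hw.lt_or_gt with hneg | hpos
    · constructor
      · refine le_trans (min_le_left _ _) ?_
        rw [hslope]
        exact mul_le_mul_of_nonpos_left hs2 hneg.le
      · refine le_trans ?_ (le_max_right _ _)
        rw [hslope]
        exact mul_le_mul_of_nonpos_left hs1 hneg.le
    · constructor
      · refine le_trans (min_le_right _ _) ?_
        rw [hslope]
        exact mul_le_mul_of_nonneg_left hs1 hpos.le
      · refine le_trans ?_ (le_max_left _ _)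
        rw [hslope]
        exact mul_le_mul_of_nonneg_left hs2 hpos.le
  obtain ⟨t₀, ht₀⟩ := hZne
  -- finiteness
  have hAtop : A ≠ ⊤ := by
    intro hA
    have := hqy t₀ ht₀
    rw [hA, EReal.top_sub_coe] at this
    exact SOT_ne_top K J hKtop hJtop y t₀ (top_le_iff.mp this)
  have hBtop : B ≠ ⊤ := by
    intro hB
    have := hqx t₀ ht₀
    rw [hB, EReal.top_sub_coe] at this
    exact SOT_ne_top K J hKtop hJtop x t₀ (top_le_iff.mp this)
  obtain ⟨t₁, ht₁, hSy1⟩ : ∃ t ∈ Z, SOT K J y t ≠ ⊥ := by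
    by_contra hcon
    push_neg at hcon
    apply hAbot
    rw [hrepy]
    exact le_bot_iff.mp (iSup₂_le fun t ht => (hcon t ht).le)
  have hR1 : R t₁ ≠ ⊥ := by
    intro hRb
    apply hSy1
    rw [hsplity t₁, hRb, EReal.bot_add]
  have hSx1 : SOT K J x t₁ ≠ ⊥ := by
    rw [hsplitx t₁, hxit t₁, ← hsub_add, hCcoe _ (hmemZ t₁ ht₁).2]
    intro hbt
    rcases EReal.add_eq_bot_iff.mp hbt with h | h
    · exact hR1 h
    · exact EReal.coe_ne_bot _ h
  have hBbot : B ≠ ⊥ := by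
    intro hB
    apply hSx1
    have hle : SOT K J x t₁ ≤ B := by
      rw [hrepx]; exact le_iSup₂ (f := fun t (_ : t ∈ Z) => SOT K J x t) t₁ ht₁
    rw [hB] at hle
    exact le_bot_iff.mp hle
  -- EReal bounds
  have hup : B ≤ A + (cHi : EReal) := by
    rw [hrepx]
    refine iSup₂_le fun t ht => ?_
    obtain ⟨hu, huw⟩ := hmemZ t ht
    rw [hsub_add] at huw
    have hy_le : SOT K J y t ≤ A := by
      rw [hrepy]; exact le_iSup₂ (f := fun t (_ : t ∈ Z) => SOT K J y t) t ht
    calc SOT K J x t = R t + ((g (t - y i + w) : ℝ) : EReal) := by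
          rw [hsplitx t, hxit t, hCcoe _ (by rw [← hsub_add]; exact (hmemZ t ht).2)]
      _ ≤ R t + ((g (t - y i) + cHi : ℝ) : EReal) := by
          refine add_le_add_right (EReal.coe_le_coe_iff.mpr ?_) _
          have := (hc t ht).2; linarith
      _ = (R t + ((g (t - y i) : ℝ) : EReal)) + (cHi : EReal) := by
          rw [EReal.coe_add]; abel
      _ = SOT K J y t + (cHi : EReal) := by rw [hsplity t, hCcoe _ hu]
      _ ≤ A + (cHi : EReal) := add_le_add_left hy_le _
  have hlow : A ≤ B + ((-cLo : ℝ) : EReal) := by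
    rw [hrepy]
    refine iSup₂_le fun t ht => ?_
    obtain ⟨hu, huw⟩ := hmemZ t ht
    have hx_le : SOT K J x t ≤ B := by
      rw [hrepx]; exact le_iSup₂ (f := fun t (_ : t ∈ Z) => SOT K J x t) t ht
    calc SOT K J y t = R t + ((g (t - y i) : ℝ) : EReal) := by rw [hsplity t, hCcoe _ hu]
      _ ≤ R t + ((g (t - y i + w) + -cLo : ℝ) : EReal) := by
          refine add_le_add_right (EReal.coe_le_coe_iff.mpr ?_) _
          have := (hc t ht).1; linarith
      _ = (R t + ((g (t - y i + w) : ℝ) : EReal)) + ((-cLo : ℝ) : EReal) := by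
          rw [EReal.coe_add]; abel
      _ = SOT K J x t + ((-cLo : ℝ) : EReal) := by
          rw [hsplitx t, hxit t, hCcoe _ (by rw [← hsub_add]; exact huw)]
      _ ≤ B + ((-cLo : ℝ) : EReal) := add_le_add_left hx_le _
  -- to reals
  have hAcoe : A = ((A.toReal : ℝ) : EReal) := (EReal.coe_toReal hAtop hAbot).symm
  have hBcoe : B = ((B.toReal : ℝ) : EReal) := (EReal.coe_toReal hBtop hBbot).symm
  have h1 : B.toReal ≤ A.toReal + cHi := by
    have : ((B.toReal : ℝ) : EReal) ≤ ((A.toReal + cHi : ℝ) : EReal) := by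
      rw [EReal.coe_add, ← hAcoe, ← hBcoe]; exact hup
    exact EReal.coe_le_coe_iff.mp this
  have h2 : A.toReal ≤ B.toReal + -cLo := by
    have : ((A.toReal : ℝ) : EReal) ≤ ((B.toReal + -cLo : ℝ) : EReal) := by
      rw [EReal.coe_add, ← hAcoe, ← hBcoe]; exact hlow
    exact EReal.coe_le_coe_iff.mp this
  refine ⟨hBbot, hBtop, ?_, ?_⟩
  · rcases he.lt_or_gt with heneg | hepos
    · -- e < 0, w = -e > 0 : cHi = w*SA
      rw [le_div_iff_of_neg heneg]
      have hmax : cHi = w * SA := max_eq_left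
        (mul_le_mul_of_nonneg_left hSBA (by rw [hwdef]; linarith))
      have hring : -SA * e = w * SA := by rw [hwdef]; ring
      rw [hring, ← hmax]
      linarith
    · -- e > 0, w < 0 : cLo = w*SA
      rw [le_div_iff₀ hepos]
      have hmin : cLo = w * SA := min_eq_left
        (mul_le_mul_of_nonpos_left hSBA (by rw [hwdef]; linarith))
      have hring : -SA * e = w * SA := by rw [hwdef]; ring
      rw [hring, ← hmin]
      linarith
  · rcases he.lt_or_gt with heneg | hepos
    · -- e < 0, w > 0 : cLo = w*SB
      rw [div_le_iff_of_neg heneg]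
      have hmin : cLo = w * SB := min_eq_right
        (mul_le_mul_of_nonneg_left hSBA (by rw [hwdef]; linarith))
      have hring : -SB * e = w * SB := by rw [hwdef]; ring
      rw [hring, ← hmin]
      linarith
    · -- e > 0, w < 0 : cHi = w*SB
      rw [div_le_iff₀ hepos]
      have hmax : cHi = w * SB := max_eq_right
        (mul_le_mul_of_nonpos_left hSBA (by rw [hwdef]; linarith))
      have hring : -SB * e = w * SB := by rw [hwdef]; ring
      rw [hring, ← hmax]
      linarith

/-- (Lemma 5.2 / `lem:Demyanov-formula`.) Dini derivative estimates for
the interval maxima: with `Z = Z_j(y,q)`, `z_* = inf Z`, `z^* = sup Z`, for every `i`,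
`-D₋K_i(z_* - y_i) ≤ liminf_{h↓0} (m_j(y+he_i)-m_j(y))/h
 ≤ limsup_{h↓0} (m_j(y+he_i)-m_j(y))/h ≤ -D₋K_i(z^* - y_i)`,
and analogously for the left-sided Dini derivatives with `D₊`. -/
theorem Dini_derivative_estimates
    {n : ℕ} (hn : 1 ≤ n) (K : Fin n → ℝ → EReal) (J : ℝ → EReal)
    (hK : ∀ i, IsKernel (K i)) (hsing : ∀ i, K i 0 = ⊥) (hJ : IsNField n J)
    (y : Fin n → ℝ) (hy : y ∈ openSimplex n)
    (j : ℕ) (hj : j ≤ n) (hm : mj K J y j ≠ ⊥)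
    (q η : ℝ) (hq : 0 < q) (hη : 0 < η)
    (Z : Set ℝ) (hZ : Z ⊆ Ij y j)
    (hprop : ∀ x ∈ closedSimplex n, dist x y ≤ η →
      (Z ⊆ Ij x j ∧ ∀ t ∈ Z, ∀ i, η ≤ |t - x i|) ∧
      mj K J x j = (⨆ t ∈ Z, SOT K J x t) ∧
      ∀ t ∈ Z, mj K J x j - (q : EReal) ≤ SOT K J x t) :
    ∀ i : Fin n,
      -- the right-sided difference quotient of `m_j` in direction `e_i`
      (∀ gplus : ℝ → EReal, (gplus = fun h : ℝ =>
          ((((mj K J (fun k => y k + if k = i then h else 0) j).toReal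
              - (mj K J y j).toReal) / h : ℝ) : EReal)) →
        (↑(-(Dm (toR (K i)) (sInf Z - y i))) : EReal) ≤ liminf gplus (𝓝[>] (0:ℝ)) ∧
        liminf gplus (𝓝[>] (0:ℝ)) ≤ limsup gplus (𝓝[>] (0:ℝ)) ∧
        limsup gplus (𝓝[>] (0:ℝ)) ≤ (↑(-(Dm (toR (K i)) (sSup Z - y i))) : EReal)) ∧
      -- the left-sided difference quotient of `m_j` in direction `e_i`
      (∀ gminus : ℝ → EReal, (gminus = fun h : ℝ =>
          ((((mj K J (fun k => y k - if k = i then h else 0) j).toReal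
              - (mj K J y j).toReal) / (-h) : ℝ) : EReal)) →
        (↑(-(Dp (toR (K i)) (sInf Z - y i))) : EReal) ≤ liminf gminus (𝓝[>] (0:ℝ)) ∧
        liminf gminus (𝓝[>] (0:ℝ)) ≤ limsup gminus (𝓝[>] (0:ℝ)) ∧
        limsup gminus (𝓝[>] (0:ℝ)) ≤ (↑(-(Dp (toR (K i)) (sSup Z - y i))) : EReal)) := by
  have hyS : y ∈ closedSimplex n := ⟨hy.1.monotone, fun k => ⟨(hy.2 k).1.le, (hy.2 k).2.le⟩⟩
  obtain ⟨⟨hZy, hsepy⟩, hrepy, hqy⟩ := hprop y hyS (by rw [dist_self]; exact hη.le)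
  have hZne : Z.Nonempty := by
    rcases Set.eq_empty_or_nonempty Z with hZe | h
    · exfalso; apply hm; rw [hrepy, hZe]; simp
    · exact h
  have hLo0 : 0 ≤ nodeLo y j := by
    unfold nodeLo; split
    · exact (hy.2 _).1.le
    · exact le_refl _
  have hHi1 : nodeHi y j ≤ 1 := by
    unfold nodeHi; split
    · exact (hy.2 _).2.le
    · exact le_refl _
  have hZ01 : ∀ t ∈ Z, 0 ≤ t ∧ t ≤ 1 := fun t ht =>
    ⟨hLo0.trans (hZ ht).1, (hZ ht).2.trans hHi1⟩
  have hZbb : BddBelow Z := ⟨0, fun t ht => (hZ01 t ht).1⟩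
  have hZba : BddAbove Z := ⟨1, fun t ht => (hZ01 t ht).2⟩
  have hKtop : ∀ k t, K k t ≠ ⊤ := fun k t => (hK k).ne_top t
  have hJtop : ∀ t, J t ≠ ⊤ := hJ.ne_top
  intro i
  have hyi0 : 0 < y i := (hy.2 i).1
  have hyi1 : y i < 1 := (hy.2 i).2
  -- all of Z lies on one side of y i
  have hside : (∀ t ∈ Z, y i + η ≤ t) ∨ (∀ t ∈ Z, t ≤ y i - η) := by
    by_cases hij : (i : ℕ) < j
    · left; intro t ht
      have h1 : y i ≤ nodeLo y j := by
        unfold nodeLo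
        rw [dif_pos (⟨by omega, hj⟩ : 0 < j ∧ j ≤ n)]
        exact hy.1.monotone (by rw [Fin.le_def]; simp; omega)
      have h2 := hsepy t ht i
      have h3 : 0 ≤ t - y i := by linarith [(hZ ht).1]
      rw [abs_of_nonneg h3] at h2
      linarith
    · right; intro t ht
      have hjn : j < n := by omega
      have h1 : nodeHi y j ≤ y i := by
        unfold nodeHi
        rw [dif_pos hjn]
        exact hy.1.monotone (by rw [Fin.le_def]; simp; omega)
      have h2 := hsepy t ht i
      have h3 : t - y i ≤ 0 := by linarith [(hZ ht).2]
      rw [abs_of_nonpos h3] at h2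
      linarith
  -- the step size bound δ
  set δ : ℝ := min η (min (nodeHi y ((i : ℕ) + 1) - y i) (y i - nodeLo y (i : ℕ))) / 2 with hδdef
  have hNodeHi_gt : y i < nodeHi y ((i : ℕ) + 1) := by
    unfold nodeHi; split
    · exact hy.1 (by rw [Fin.lt_def]; simp)
    · exact hyi1
  have hNodeHi_le1 : nodeHi y ((i : ℕ) + 1) ≤ 1 := by
    unfold nodeHi; split
    · exact (hy.2 _).2.le
    · exact le_refl _
  have hNodeLo_lt : nodeLo y (i : ℕ) < y i := by
    unfold nodeLo; split
    · next h => exact hy.1 (by rw [Fin.lt_def]; simp; omega)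
    · exact hyi0
  have hNodeLo_0 : 0 ≤ nodeLo y (i : ℕ) := by
    unfold nodeLo; split
    · exact (hy.2 _).1.le
    · exact le_refl _
  have hδpos : 0 < δ := by
    rw [hδdef]
    have h1 : 0 < min η (min (nodeHi y ((i : ℕ) + 1) - y i) (y i - nodeLo y (i : ℕ))) := by
      rw [lt_min_iff, lt_min_iff]
      exact ⟨hη, by linarith, by linarith⟩
    linarith
  have hδη : 2 * δ ≤ η := by
    rw [hδdef]
    have := min_le_left η (min (nodeHi y ((i : ℕ) + 1) - y i) (y i - nodeLo y (i : ℕ)))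
    linarith
  have hδ2 : 2 * δ ≤ nodeHi y ((i : ℕ) + 1) - y i := by
    rw [hδdef]
    have h1 := min_le_right η (min (nodeHi y ((i : ℕ) + 1) - y i) (y i - nodeLo y (i : ℕ)))
    have h2 := min_le_left (nodeHi y ((i : ℕ) + 1) - y i) (y i - nodeLo y (i : ℕ))
    linarith
  have hδ3 : 2 * δ ≤ y i - nodeLo y (i : ℕ) := by
    rw [hδdef]
    have h1 := min_le_right η (min (nodeHi y ((i : ℕ) + 1) - y i) (y i - nodeLo y (i : ℕ)))
    have h2 := min_le_right (nodeHi y ((i : ℕ) + 1) - y i) (y i - nodeLo y (i : ℕ))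
    linarith
  -- helper order facts
  have hupper : ∀ l : Fin n, i < l → nodeHi y ((i : ℕ) + 1) ≤ y l := by
    intro l hl
    have hin : (i : ℕ) + 1 < n := by
      have := l.isLt
      have := (Fin.lt_def.mp hl)
      omega
    unfold nodeHi
    rw [dif_pos hin]
    exact hy.1.monotone (by rw [Fin.le_def]; simp; exact Fin.lt_def.mp hl)
  have hlower : ∀ k : Fin n, k < i → y k ≤ nodeLo y (i : ℕ) := by
    intro k hk
    have hipos : 0 < (i : ℕ) := by
      have := Fin.lt_def.mp hk; omega
    unfold nodeLo
    rw [dif_pos (⟨hipos, le_of_lt i.isLt⟩ : 0 < (i : ℕ) ∧ (i : ℕ) ≤ n)]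
    exact hy.1.monotone (by rw [Fin.le_def]; simp; have := Fin.lt_def.mp hk; omega)
  -- perturbed point membership
  have hxmem : ∀ e : ℝ, |e| ≤ δ →
      (fun k => y k + if k = i then e else 0) ∈ closedSimplex n ∧
      dist (fun k => y k + if k = i then e else 0) y ≤ η := by
    intro e hle
    obtain ⟨hle1, hle2⟩ := abs_le.mp hle
    constructor
    · constructor
      · intro k l hkl
        by_cases hk : k = i
        · by_cases hl' : l = i
          · rw [hk, hl']
          · rw [hk] at hkl ⊢
            have hil : i < l := lt_of_le_of_ne hkl (Ne.symm hl')
            simp only [if_neg hl', add_zero, if_true, eq_self_iff_true]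
            have := hupper l hil
            linarith
        · by_cases hl' : l = i
          · rw [hl'] at hkl ⊢
            have hki : k < i := lt_of_le_of_ne hkl hk
            simp only [if_neg hk, add_zero, if_true, eq_self_iff_true]
            have := hlower k hki
            linarith
          · simp only [if_neg hk, if_neg hl', add_zero]
            exact hy.1.monotone hkl
      · intro k
        by_cases hk : k = i
        · subst hk
          simp only [if_true, eq_self_iff_true]
          constructor
          · linarith
          · linarith
        · simp only [if_neg hk]
          exact ⟨by linarith [(hy.2 k).1], by linarith [(hy.2 k).2]⟩
    · rw [dist_pi_le_iff hη.le]
      intro k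
      rw [Real.dist_eq]
      by_cases hk : k = i
      · subst hk; simp only [if_pos rfl, add_sub_cancel_left]
        calc |e| ≤ δ := hle
          _ ≤ η := by linarith
      · simp only [if_neg hk, add_zero, sub_self, abs_zero]
        linarith
  -- concavity bundle depending on the side
  set g : ℝ → ℝ := toR (K i) with hgdef
  set a₀ : ℝ := sInf Z - y i with ha₀def
  set b₀ : ℝ := sSup Z - y i with hb₀def
  obtain ⟨C, hCg, hCcoe, hCmem, htdmA, htdmB, htdpA, htdpB⟩ :
      ∃ C : Set ℝ, ConcaveOn ℝ C g ∧ (∀ u ∈ C, K i u = ((g u : ℝ) : EReal)) ∧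
        (∀ e : ℝ, |e| ≤ δ →
          ((∀ t ∈ Z, (t - y i) ∈ C ∧ (t - y i - e) ∈ C) ∧
          a₀ ∈ C ∧ (a₀ - e) ∈ C ∧ b₀ ∈ C ∧ (b₀ - e) ∈ C)) ∧
        Tendsto (fun h : ℝ => slope g a₀ (a₀ - h)) (𝓝[>] (0:ℝ)) (𝓝 (Dm g a₀)) ∧
        Tendsto (fun h : ℝ => slope g b₀ (b₀ - h)) (𝓝[>] (0:ℝ)) (𝓝 (Dm g b₀)) ∧
        Tendsto (fun h : ℝ => slope g a₀ (a₀ + h)) (𝓝[>] (0:ℝ)) (𝓝 (Dp g a₀)) ∧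
        Tendsto (fun h : ℝ => slope g b₀ (b₀ + h)) (𝓝[>] (0:ℝ)) (𝓝 (Dp g b₀)) := by
    have hInf_le_Sup : sInf Z ≤ sSup Z := csInf_le_csSup hZne hZbb hZba
    have hSup_le1 : sSup Z ≤ 1 := csSup_le hZne fun t ht => (hZ01 t ht).2
    have hInf_ge0 : 0 ≤ sInf Z := le_csInf hZne fun t ht => (hZ01 t ht).1
    rcases hside with hplus | hminus
    · -- Z to the right of y i : C = Ioc 0 1
      have hInfb : y i + η ≤ sInf Z := le_csInf hZne hplus
      have hmemt : ∀ e : ℝ, |e| ≤ δ → ∀ s : ℝ, y i + η ≤ s → s ≤ 1 →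
          ((s - y i) ∈ Ioc (0:ℝ) 1 ∧ (s - y i - e) ∈ Ioc (0:ℝ) 1) := by
        intro e he s h1 h2
        obtain ⟨he1, he2⟩ := abs_le.mp he
        refine ⟨⟨by linarith, by linarith⟩, ⟨by linarith, by linarith⟩⟩
      have htd : ∀ p : ℝ, η ≤ p → p ≤ 1 - y i →
          Tendsto (fun h : ℝ => slope g p (p - h)) (𝓝[>] (0:ℝ)) (𝓝 (Dm g p)) ∧
          Tendsto (fun h : ℝ => slope g p (p + h)) (𝓝[>] (0:ℝ)) (𝓝 (Dp g p)) := by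
        intro p h1 h2
        have hsub : Icc (η/2) ((p+1)/2) ⊆ Ioc (0:ℝ) 1 := by
          intro u hu
          exact ⟨by linarith [hu.1], by linarith [hu.2]⟩
        constructor
        · exact concave_tendsto_slope_Dm (hK i).concave_right
            (by linarith : η/2 < p) (by linarith : p < (p+1)/2) hsub
        · exact concave_tendsto_slope_Dp (hK i).concave_right
            (by linarith : η/2 < p) (by linarith : p < (p+1)/2) hsub
      have ha1 : η ≤ a₀ := by rw [ha₀def]; linarith
      have ha2 : a₀ ≤ 1 - y i := by rw [ha₀def]; linarith
      have hb1 : η ≤ b₀ := by rw [hb₀def]; linarith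
      have hb2 : b₀ ≤ 1 - y i := by rw [hb₀def]; linarith
      refine ⟨Ioc 0 1, (hK i).concave_right, ?_, ?_, (htd a₀ ha1 ha2).1, (htd b₀ hb1 hb2).1,
        (htd a₀ ha1 ha2).2, (htd b₀ hb1 hb2).2⟩
      · intro u hu
        exact (EReal.coe_toReal ((hK i).ne_top u) ((hK i).finite_right u hu)).symm
      · intro e he
        refine ⟨fun t ht => hmemt e he t (hplus t ht) (hZ01 t ht).2, ?_, ?_, ?_, ?_⟩
        · exact (hmemt e he (sInf Z) hInfb (hInf_le_Sup.trans hSup_le1)).1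
        · exact (hmemt e he (sInf Z) hInfb (hInf_le_Sup.trans hSup_le1)).2
        · exact (hmemt e he (sSup Z) (hInfb.trans hInf_le_Sup) hSup_le1).1
        · exact (hmemt e he (sSup Z) (hInfb.trans hInf_le_Sup) hSup_le1).2
    · -- Z to the left of y i : C = Ico (-1) 0
      have hSupb : sSup Z ≤ y i - η := csSup_le hZne hminus
      have hmemt : ∀ e : ℝ, |e| ≤ δ → ∀ s : ℝ, 0 ≤ s → s ≤ y i - η →
          ((s - y i) ∈ Ico (-1:ℝ) 0 ∧ (s - y i - e) ∈ Ico (-1:ℝ) 0) := by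
        intro e he s h1 h2
        obtain ⟨he1, he2⟩ := abs_le.mp he
        refine ⟨⟨by linarith, by linarith⟩, ⟨by linarith, by linarith⟩⟩
      have htd : ∀ p : ℝ, -(y i) ≤ p → p ≤ -η →
          Tendsto (fun h : ℝ => slope g p (p - h)) (𝓝[>] (0:ℝ)) (𝓝 (Dm g p)) ∧
          Tendsto (fun h : ℝ => slope g p (p + h)) (𝓝[>] (0:ℝ)) (𝓝 (Dp g p)) := by
        intro p h1 h2
        have hsub : Icc ((p-1)/2) (-η/2) ⊆ Ico (-1:ℝ) 0 := by
          intro u hu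
          constructor
          · have := hu.1; nlinarith [hyi1]
          · have := hu.2; linarith
        constructor
        · exact concave_tendsto_slope_Dm (hK i).concave_left
            (by nlinarith [hyi1] : (p-1)/2 < p) (by linarith : p < -η/2) hsub
        · exact concave_tendsto_slope_Dp (hK i).concave_left
            (by nlinarith [hyi1] : (p-1)/2 < p) (by linarith : p < -η/2) hsub
      have ha1 : -(y i) ≤ a₀ := by rw [ha₀def]; linarith
      have ha2 : a₀ ≤ -η := by rw [ha₀def]; linarith
      have hb1 : -(y i) ≤ b₀ := by rw [hb₀def]; linarith
      have hb2 : b₀ ≤ -η := by rw [hb₀def]; linarith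
      refine ⟨Ico (-1) 0, (hK i).concave_left, ?_, ?_, (htd a₀ ha1 ha2).1, (htd b₀ hb1 hb2).1,
        (htd a₀ ha1 ha2).2, (htd b₀ hb1 hb2).2⟩
      · intro u hu
        exact (EReal.coe_toReal ((hK i).ne_top u) ((hK i).finite_left u hu)).symm
      · intro e he
        obtain ⟨he1, he2⟩ := abs_le.mp he
        refine ⟨fun t ht => hmemt e he t (hZ01 t ht).1 (hminus t ht), ?_, ?_, ?_, ?_⟩
        · exact (hmemt e he (sInf Z) hInf_ge0 (hInf_le_Sup.trans hSupb)).1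
        · exact (hmemt e he (sInf Z) hInf_ge0 (hInf_le_Sup.trans hSupb)).2
        · exact (hmemt e he (sSup Z) (hInf_ge0.trans hInf_le_Sup) hSupb).1
        · exact (hmemt e he (sSup Z) (hInf_ge0.trans hInf_le_Sup) hSupb).2
  constructor
  · -- right difference quotients
    intro gplus hgp
    have hev : ∀ᶠ h : ℝ in 𝓝[>] (0:ℝ),
        ((-(slope g a₀ (a₀ - h)) : ℝ) : EReal) ≤ gplus h ∧
        gplus h ≤ ((-(slope g b₀ (b₀ - h)) : ℝ) : EReal) := by
      filter_upwards [Ioc_mem_nhdsGT_of_mem (⟨le_refl (0:ℝ), hδpos⟩ : (0:ℝ) ∈ Ico (0:ℝ) δ)]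
        with h hh
      have h0 : 0 < h := hh.1
      have habs : |h| ≤ δ := by rw [abs_of_pos h0]; exact hh.2
      obtain ⟨hxS, hxdist⟩ := hxmem h habs
      obtain ⟨⟨hZx, hsepx⟩, hrepx, hqx⟩ := hprop _ hxS hxdist
      obtain ⟨hmem1, hmem2, hmem3, hmem4, hmem5⟩ := hCmem h habs
      obtain ⟨hBb, hBt, hlo, hhi⟩ := key_sandwich K J hKtop hJtop y
        (fun k => y k + if k = i then h else 0) i Z hZne hZbb hZba q
        (mj K J y j) (mj K J (fun k => y k + if k = i then h else 0) j)
        (fun k hk => by simp [hk]) hrepy hrepx hqy hqx hm hCg hCcoe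
        (ne_of_gt h0) (by simp) hmem1 hmem2 hmem3 hmem4 hmem5
      rw [hgp]
      exact ⟨EReal.coe_le_coe_iff.mpr hlo, EReal.coe_le_coe_iff.mpr hhi⟩
    have htA : Tendsto (fun h : ℝ => ((-(slope g a₀ (a₀ - h)) : ℝ) : EReal)) (𝓝[>] (0:ℝ))
        (𝓝 ((-(Dm g a₀) : ℝ) : EReal)) := EReal.tendsto_coe.mpr htdmA.neg
    have htB : Tendsto (fun h : ℝ => ((-(slope g b₀ (b₀ - h)) : ℝ) : EReal)) (𝓝[>] (0:ℝ))
        (𝓝 ((-(Dm g b₀) : ℝ) : EReal)) := EReal.tendsto_coe.mpr htdmB.neg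
    refine ⟨?_, liminf_le_limsup, ?_⟩
    · calc ((-(Dm g a₀) : ℝ) : EReal)
          = liminf (fun h : ℝ => ((-(slope g a₀ (a₀ - h)) : ℝ) : EReal)) (𝓝[>] (0:ℝ)) :=
            htA.liminf_eq.symm
        _ ≤ liminf gplus (𝓝[>] (0:ℝ)) := liminf_le_liminf (hev.mono fun h hh => hh.1)
    · calc limsup gplus (𝓝[>] (0:ℝ))
          ≤ limsup (fun h : ℝ => ((-(slope g b₀ (b₀ - h)) : ℝ) : EReal)) (𝓝[>] (0:ℝ)) :=
            limsup_le_limsup (hev.mono fun h hh => hh.2)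
        _ = ((-(Dm g b₀) : ℝ) : EReal) := htB.limsup_eq
  · -- left difference quotients
    intro gminus hgm
    have hev : ∀ᶠ h : ℝ in 𝓝[>] (0:ℝ),
        ((-(slope g a₀ (a₀ - -h)) : ℝ) : EReal) ≤ gminus h ∧
        gminus h ≤ ((-(slope g b₀ (b₀ - -h)) : ℝ) : EReal) := by
      filter_upwards [Ioc_mem_nhdsGT_of_mem (⟨le_refl (0:ℝ), hδpos⟩ : (0:ℝ) ∈ Ico (0:ℝ) δ)]
        with h hh
      have h0 : 0 < h := hh.1
      have habs : |(-h)| ≤ δ := by rw [abs_neg, abs_of_pos h0]; exact hh.2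
      have hfun : (fun k => y k - if k = i then h else 0)
          = (fun k => y k + if k = i then -h else 0) := by
        funext k
        by_cases hk : k = i
        · simp [hk]; ring
        · simp [hk]
      obtain ⟨hxS, hxdist⟩ := hxmem (-h) habs
      rw [← hfun] at hxS hxdist
      obtain ⟨⟨hZx, hsepx⟩, hrepx, hqx⟩ := hprop _ hxS hxdist
      obtain ⟨hmem1, hmem2, hmem3, hmem4, hmem5⟩ := hCmem (-h) habs
      obtain ⟨hBb, hBt, hlo, hhi⟩ := key_sandwich K J hKtop hJtop y
        (fun k => y k - if k = i then h else 0) i Z hZne hZbb hZba q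
        (mj K J y j) (mj K J (fun k => y k - if k = i then h else 0) j)
        (fun k hk => by simp [hk]) hrepy hrepx hqy hqx hm hCg hCcoe
        (by intro hc; exact (ne_of_gt h0) (by linarith [neg_eq_zero.mp hc]) : (-h) ≠ 0)
        (by simp; ring) hmem1 hmem2 hmem3 hmem4 hmem5
      rw [hgm]
      exact ⟨EReal.coe_le_coe_iff.mpr hlo, EReal.coe_le_coe_iff.mpr hhi⟩
    have heq1 : (fun h : ℝ => slope g a₀ (a₀ - -h)) = (fun h : ℝ => slope g a₀ (a₀ + h)) := by
      funext h; rw [sub_neg_eq_add]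
    have heq2 : (fun h : ℝ => slope g b₀ (b₀ - -h)) = (fun h : ℝ => slope g b₀ (b₀ + h)) := by
      funext h; rw [sub_neg_eq_add]
    have htA : Tendsto (fun h : ℝ => ((-(slope g a₀ (a₀ - -h)) : ℝ) : EReal)) (𝓝[>] (0:ℝ))
        (𝓝 ((-(Dp g a₀) : ℝ) : EReal)) := by
      refine EReal.tendsto_coe.mpr (Tendsto.neg ?_)
      rw [heq1]; exact htdpA
    have htB : Tendsto (fun h : ℝ => ((-(slope g b₀ (b₀ - -h)) : ℝ) : EReal)) (𝓝[>] (0:ℝ))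
        (𝓝 ((-(Dp g b₀) : ℝ) : EReal)) := by
      refine EReal.tendsto_coe.mpr (Tendsto.neg ?_)
      rw [heq2]; exact htdpB
    refine ⟨?_, liminf_le_limsup, ?_⟩
    · calc ((-(Dp g a₀) : ℝ) : EReal)
          = liminf (fun h : ℝ => ((-(slope g a₀ (a₀ - -h)) : ℝ) : EReal)) (𝓝[>] (0:ℝ)) :=
            htA.liminf_eq.symm
        _ ≤ liminf gminus (𝓝[>] (0:ℝ)) := liminf_le_liminf (hev.mono fun h hh => hh.1)
    · calc limsup gminus (𝓝[>] (0:ℝ))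
          ≤ limsup (fun h : ℝ => ((-(slope g b₀ (b₀ - -h)) : ℝ) : EReal)) (𝓝[>] (0:ℝ)) :=
            limsup_le_limsup (hev.mono fun h hh => hh.2)
        _ = ((-(Dp g b₀) : ℝ) : EReal) := htB.limsup_eq

end
end

section
/- Let K_1,…,K_n be kernel functions satisfying condition (PM_c) for some c > 0. Let y ∈ S, and for each j ∈ {0,1,…,n} let t_{*j} ≤ t*_j be two points in relint I_j(y). For each j ∈ {0,1,…,n} and r ∈ {1,…,n} let μ_{jr} be an arbitrary number in the interval [D₋K_r(t*_j - y_r), D₋K_r(t_{*j} - y_r)]. Then the n×n matrix A = [a_{jr}]_{j,r=1}^n with entries a_{jr} := μ_{jr} - μ_{(j-1)r} satisfies a_{rr} - Σ_{j=1, j≠r}^n |a_{jr}| ≥ c for every r = 1,…,n; in particular A is diagonally dominant and hence invertible. -/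
open Set Filter
open scoped BigOperators Topology

noncomputable section

section AuxLemmas

open Set Filter

private lemma aux_hasLeftDeriv {s : Set ℝ} {f : ℝ → ℝ} (hf : ConvexOn ℝ s f)
    {a x y : ℝ} (ha : a ∈ s) (hx : x ∈ s) (hy : y ∈ s) (hax : a < x) (hxy : x < y) :
    HasDerivWithinAt f (derivWithin f (Iio x) x) (Iio x) x ∧
      derivWithin f (Iio x) x ≤ slope f x y := by
  have hsub : Icc a x ⊆ s := hf.1.ordConnected.out ha hx
  have hmemI : ∀ t ∈ Ioo a x, t ∈ s \ {x} := fun t ht =>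
    ⟨hsub ⟨ht.1.le, ht.2.le⟩, ne_of_lt ht.2⟩
  have hmono : MonotoneOn (slope f x) (Ioo a x) := fun t ht u hu htu =>
    hf.slope_mono hx (hmemI t ht) (hmemI u hu) htu
  have hboundfun : ∀ t ∈ Ioo a x, slope f x t ≤ slope f x y := fun t ht =>
    hf.slope_mono hx (hmemI t ht) ⟨hy, ne_of_gt hxy⟩ (ht.2.le.trans hxy.le)
  have hbdd : BddAbove (slope f x '' Ioo a x) := ⟨slope f x y, by
    rintro _ ⟨t, ht, rfl⟩; exact hboundfun t ht⟩
  have hne : (Ioo a x).Nonempty := nonempty_Ioo.mpr hax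
  have htend : Tendsto (slope f x) (𝓝[<] x) (𝓝 (sSup (slope f x '' Ioo a x))) :=
    hmono.tendsto_nhdsWithin_Ioo_left hne hbdd
  have hD : HasDerivWithinAt f (sSup (slope f x '' Ioo a x)) (Iio x) x :=
    (hasDerivWithinAt_iff_tendsto_slope' (notMem_Iio_self)).mpr htend
  have hdw : derivWithin f (Iio x) x = sSup (slope f x '' Ioo a x) :=
    hD.derivWithin (uniqueDiffWithinAt_Iio x)
  refine ⟨hdw ▸ hD, ?_⟩
  rw [hdw]
  exact csSup_le (hne.image _) (by rintro _ ⟨t, ht, rfl⟩; exact hboundfun t ht)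

private lemma concave_Dm_anti {s : Set ℝ} {f : ℝ → ℝ} (hf : ConcaveOn ℝ s f)
    {a x z b : ℝ} (ha : a ∈ s) (hx : x ∈ s) (hz : z ∈ s) (hb : b ∈ s)
    (hax : a < x) (hxz : x ≤ z) (hzb : z < b) :
    Dm f z ≤ Dm f x := by
  show derivWithin f (Iio z) z ≤ derivWithin f (Iio x) x
  rcases eq_or_lt_of_le hxz with rfl | hxz
  · exact le_refl _
  have hg : ConvexOn ℝ s (-f) := hf.neg
  obtain ⟨hdx, hslope⟩ := aux_hasLeftDeriv hg ha hx hz hax hxz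
  obtain ⟨hdz, -⟩ := aux_hasLeftDeriv hg hx hz hb hxz hzb
  have h2 : slope (-f) x z ≤ derivWithin (-f) (Iio z) z :=
    hg.slope_le_leftDeriv hx hz hxz hdz.differentiableWithinAt
  have h3 : derivWithin (-f) (Iio x) x ≤ derivWithin (-f) (Iio z) z := hslope.trans h2
  have e1 : derivWithin (-f) (Iio x) x = -derivWithin f (Iio x) x := by
    have := derivWithin.neg (f := f) (𝕜 := ℝ) (s := Iio x) (x := x)
    simpa using this
  have e2 : derivWithin (-f) (Iio z) z = -derivWithin f (Iio z) z := by
    have := derivWithin.neg (f := f) (𝕜 := ℝ) (s := Iio z) (x := z)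
    simpa using this
  rw [e1, e2] at h3
  linarith

private lemma relIntIcc_mem {a b t : ℝ} (h : t ∈ relIntIcc a b) :
    a ≤ t ∧ t ≤ b ∧ (a ≠ 0 → a < t) ∧ (b ≠ 1 → t < b) := by
  unfold relIntIcc at h
  obtain ⟨h1, h2⟩ := h
  refine ⟨?_, ?_, ?_, ?_⟩
  · split_ifs at h1 with h'
    · exact h1
    · exact le_of_lt h1
  · split_ifs at h2 with h'
    · exact h2
    · exact le_of_lt h2
  · intro hne; rw [if_neg hne] at h1; exact h1
  · intro hne; rw [if_neg hne] at h2; exact h2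

end AuxLemmas

/-- (Lemma 6.4 / `lem:cdiagdom`.) If the kernels satisfy (PM_c) with
`c > 0`, `y ∈ S`, `t_{*j} ≤ t*_j` are points of `relint I_j(y)` and
`μ_{jr} ∈ [D₋K_r(t*_j - y_r), D₋K_r(t_{*j} - y_r)]`, then the matrix
`A = [μ_{jr} - μ_{(j-1)r}]_{j,r=1}^n` is diagonally `c`-dominant and hence invertible. -/
theorem diagonally_dominant_matrix_lemma
    {n : ℕ} (hn : 1 ≤ n) (K : Fin n → ℝ → EReal)
    (hK : ∀ i, IsKernel (K i))
    (c : ℝ) (hc : 0 < c) (hPM : ∀ i, PMcond (K i) c)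
    (y : Fin n → ℝ) (hy : y ∈ openSimplex n)
    (tlo thi : Fin (n + 1) → ℝ)
    (hle : ∀ j, tlo j ≤ thi j)
    (hlo : ∀ j : Fin (n + 1), tlo j ∈ relIntIcc (nodeLo y (j : ℕ)) (nodeHi y (j : ℕ)))
    (hhi : ∀ j : Fin (n + 1), thi j ∈ relIntIcc (nodeLo y (j : ℕ)) (nodeHi y (j : ℕ)))
    (μ : Fin (n + 1) → Fin n → ℝ)
    (hμ : ∀ j r, μ j r ∈ Icc (Dm (toR (K r)) (thi j - y r)) (Dm (toR (K r)) (tlo j - y r))) :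
    (∀ r : Fin n,
        c ≤ (μ r.succ r - μ r.castSucc r) -
          ∑ j ∈ Finset.univ.erase r, |μ j.succ r - μ j.castSucc r|) ∧
    (Matrix.of fun j r : Fin n => μ j.succ r - μ j.castSucc r).det ≠ 0 := by
  obtain ⟨hsm, hmemy⟩ := hy
  have ypos : ∀ i, 0 < y i := fun i => (hmemy i).1
  have ylt1 : ∀ i, y i < 1 := fun i => (hmemy i).2
  have ymono : Monotone y := hsm.monotone
  -- antitonicity of the left derivative on the negative and positive sides
  have antineg : ∀ r : Fin n, ∀ u v : ℝ, -1 < u → u ≤ v → v < 0 →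
      Dm (toR (K r)) v ≤ Dm (toR (K r)) u := by
    intro r u v hu huv hv
    have h1 : u < 0 := lt_of_le_of_lt huv hv
    have h2 : -1 < v := lt_of_lt_of_le hu huv
    exact concave_Dm_anti (hK r).concave_left (a := (u - 1) / 2) (b := v / 2)
      ⟨by linarith, by linarith⟩ ⟨hu.le, h1⟩ ⟨h2.le, hv⟩ ⟨by linarith, by linarith⟩
      (by linarith) huv (by linarith)
  have antipos : ∀ r : Fin n, ∀ u v : ℝ, 0 < u → u ≤ v → v < 1 →
      Dm (toR (K r)) v ≤ Dm (toR (K r)) u := by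
    intro r u v hu huv hv
    have h1 : 0 < v := lt_of_lt_of_le hu huv
    have h2 : u < 1 := lt_of_le_of_lt huv hv
    exact concave_Dm_anti (hK r).concave_right (a := u / 2) (b := (v + 1) / 2)
      ⟨by linarith, by linarith⟩ ⟨hu, by linarith⟩ ⟨h1, hv.le⟩ ⟨by linarith, by linarith⟩
      (by linarith) huv (by linarith)
  -- location of the points relative to y r
  have negblock : ∀ r : Fin n, ∀ j : Fin (n + 1), (j : ℕ) ≤ (r : ℕ) → ∀ t : ℝ,
      t ∈ relIntIcc (nodeLo y (j : ℕ)) (nodeHi y (j : ℕ)) →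
      -1 < t - y r ∧ t - y r < 0 := by
    intro r j hjr t ht
    obtain ⟨hlo', hhi', -, hhi2⟩ := relIntIcc_mem ht
    have hjn : (j : ℕ) < n := lt_of_le_of_lt hjr r.isLt
    have hHi : nodeHi y (j : ℕ) = y ⟨(j : ℕ), hjn⟩ := by
      unfold nodeHi; rw [dif_pos hjn]
    have h1 : t < y ⟨(j : ℕ), hjn⟩ := by
      rw [← hHi]; exact hhi2 (hHi ▸ ne_of_lt (ylt1 _))
    have h2 : y ⟨(j : ℕ), hjn⟩ ≤ y r := ymono (Fin.le_def.mpr hjr)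
    have h3 : 0 ≤ nodeLo y (j : ℕ) := by
      unfold nodeLo; split_ifs with h
      · exact (ypos _).le
      · exact le_refl 0
    exact ⟨by linarith [ylt1 r], by linarith⟩
  have posblock : ∀ r : Fin n, ∀ j : Fin (n + 1), (r : ℕ) < (j : ℕ) → ∀ t : ℝ,
      t ∈ relIntIcc (nodeLo y (j : ℕ)) (nodeHi y (j : ℕ)) →
      0 < t - y r ∧ t - y r < 1 := by
    intro r j hrj t ht
    obtain ⟨-, hhi', hlo2, -⟩ := relIntIcc_mem ht
    have hjn : (j : ℕ) ≤ n := by omega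
    have hj0 : 0 < (j : ℕ) := by omega
    have hjm : (j : ℕ) - 1 < n := by omega
    have hLo : nodeLo y (j : ℕ) = y ⟨(j : ℕ) - 1, hjm⟩ := by
      unfold nodeLo; rw [dif_pos ⟨hj0, hjn⟩]
    have h1 : y ⟨(j : ℕ) - 1, hjm⟩ < t := by
      rw [← hLo]; exact hlo2 (hLo ▸ ne_of_gt (ypos _))
    have h2 : y r ≤ y ⟨(j : ℕ) - 1, hjm⟩ :=
      ymono (Fin.le_def.mpr (show (r : ℕ) ≤ (j : ℕ) - 1 by omega))
    have h3 : nodeHi y (j : ℕ) ≤ 1 := by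
      unfold nodeHi; split_ifs with h
      · exact (ylt1 _).le
      · exact le_refl 1
    exact ⟨by linarith, by linarith [ypos r]⟩
  -- consecutive test points are ordered
  have horder : ∀ j : Fin n, thi j.castSucc ≤ tlo j.succ := by
    intro j
    have h1 := (relIntIcc_mem (hhi j.castSucc)).2.1
    have h2 := (relIntIcc_mem (hlo j.succ)).1
    have e1 : nodeHi y ((j.castSucc : Fin (n + 1)) : ℕ) = y ⟨(j : ℕ), j.isLt⟩ := by
      simp only [Fin.coe_castSucc]
      unfold nodeHi; rw [dif_pos j.isLt]
    have e2 : nodeLo y ((j.succ : Fin (n + 1)) : ℕ) = y ⟨(j : ℕ), j.isLt⟩ := by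
      simp only [Fin.val_succ]
      unfold nodeLo
      rw [dif_pos (⟨Nat.succ_pos _, j.isLt⟩ : 0 < (j : ℕ) + 1 ∧ (j : ℕ) + 1 ≤ n)]
      exact congrArg y (Fin.ext (show (j : ℕ) + 1 - 1 = (j : ℕ) by omega))
    rw [e1] at h1; rw [e2] at h2
    linarith
  -- off-diagonal entries are nonpositive
  have hoffdiag : ∀ r j : Fin n, j ≠ r → μ j.succ r ≤ μ j.castSucc r := by
    intro r j hjr
    have hne : (j : ℕ) ≠ (r : ℕ) := fun h => hjr (Fin.ext h)
    rcases hne.lt_or_gt with hJ | hJ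
    · -- negative block
      have h1 := negblock r j.castSucc (by simp only [Fin.coe_castSucc]; omega)
        (thi j.castSucc) (hhi _)
      have h2 := negblock r j.succ (by simp only [Fin.val_succ]; omega)
        (tlo j.succ) (hlo _)
      have hd := antineg r (thi j.castSucc - y r) (tlo j.succ - y r) h1.1
        (by linarith [horder j]) h2.2
      exact le_trans (hμ j.succ r).2 (le_trans hd (hμ j.castSucc r).1)
    · -- positive block
      have h1 := posblock r j.castSucc (by simp only [Fin.coe_castSucc]; omega)
        (thi j.castSucc) (hhi _)
      have h2 := posblock r j.succ (by simp only [Fin.val_succ]; omega)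
        (tlo j.succ) (hlo _)
      have hd := antipos r (thi j.castSucc - y r) (tlo j.succ - y r) h1.1
        (by linarith [horder j]) h2.2
      exact le_trans (hμ j.succ r).2 (le_trans hd (hμ j.castSucc r).1)
  -- key telescoping bound
  have hkey : ∀ r : Fin n, c ≤ μ (Fin.last n) r - μ 0 r := by
    intro r
    have hneg := negblock r 0 (by simp) (tlo 0) (hlo 0)
    have hpos := posblock r (Fin.last n) (by simp)
      (thi (Fin.last n)) (hhi _)
    have hu0 : 0 < tlo 0 + 1 - y r := by
      have := hneg.1; linarith
    have hu1 : tlo 0 + 1 - y r < 1 := by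
      have := hneg.2; linarith
    have hPMr := hPM r (tlo 0 + 1 - y r) ⟨hu0, hu1⟩
    have e : tlo 0 + 1 - y r - 1 = tlo 0 - y r := by ring
    rw [e] at hPMr
    have hthi1 : thi (Fin.last n) ≤ 1 := by
      have h1 := (relIntIcc_mem (hhi (Fin.last n))).2.1
      have e1 : nodeHi y ((Fin.last n : Fin (n + 1)) : ℕ) = 1 := by
        simp only [Fin.val_last]
        unfold nodeHi; rw [dif_neg (lt_irrefl n)]
      rwa [e1] at h1
    have htlo0 : 0 ≤ tlo 0 := by
      have h2 := (relIntIcc_mem (hlo 0)).1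
      have e2 : nodeLo y ((0 : Fin (n + 1)) : ℕ) = 0 := by
        simp only [Fin.val_zero]
        unfold nodeLo; rw [dif_neg (by omega : ¬(0 < 0 ∧ 0 ≤ n))]
      linarith [e2 ▸ h2]
    have hd := antipos r (thi (Fin.last n) - y r) (tlo 0 + 1 - y r) hpos.1
      (by linarith) hu1
    have hμlast := (hμ (Fin.last n) r).1
    have hμ0 := (hμ 0 r).2
    linarith
  -- telescoping sum
  have hsum : ∀ r : Fin n, ∑ j : Fin n, (μ j.succ r - μ j.castSucc r)
      = μ (Fin.last n) r - μ 0 r := by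
    intro r
    set ν : ℕ → ℝ := fun m => if h : m ≤ n then μ ⟨m, Nat.lt_succ_of_le h⟩ r else 0 with hν
    have hsucc : ∀ j : Fin n, ν ((j : ℕ) + 1) = μ j.succ r := by
      intro j
      have ha : (j : ℕ) + 1 ≤ n := j.isLt
      simp only [hν]
      rw [dif_pos ha]
      exact congrArg (fun i => μ i r) (Fin.ext rfl)
    have hcast : ∀ j : Fin n, ν (j : ℕ) = μ j.castSucc r := by
      intro j
      have hb : (j : ℕ) ≤ n := le_of_lt j.isLt
      simp only [hν]
      rw [dif_pos hb]
      exact congrArg (fun i => μ i r) (Fin.ext rfl)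
    calc ∑ j : Fin n, (μ j.succ r - μ j.castSucc r)
        = ∑ j : Fin n, (ν ((j : ℕ) + 1) - ν (j : ℕ)) :=
          Finset.sum_congr rfl (fun j _ => by rw [hsucc j, hcast j])
      _ = ∑ i ∈ Finset.range n, (ν (i + 1) - ν i) :=
          Fin.sum_univ_eq_sum_range (fun i => ν (i + 1) - ν i) n
      _ = ν n - ν 0 := Finset.sum_range_sub ν n
      _ = μ (Fin.last n) r - μ 0 r := by
          simp only [hν]
          rw [dif_pos (le_refl n), dif_pos (Nat.zero_le n)]
          have e1 : (⟨n, Nat.lt_succ_of_le (le_refl n)⟩ : Fin (n + 1)) = Fin.last n :=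
            Fin.ext rfl
          have e2 : (⟨0, Nat.lt_succ_of_le (Nat.zero_le n)⟩ : Fin (n + 1)) = 0 :=
            Fin.ext (by simp)
          rw [e1, e2]
  -- the diagonal dominance estimate
  have part1 : ∀ r : Fin n,
      c ≤ (μ r.succ r - μ r.castSucc r) -
        ∑ j ∈ Finset.univ.erase r, |μ j.succ r - μ j.castSucc r| := by
    intro r
    have habs : ∑ j ∈ Finset.univ.erase r, |μ j.succ r - μ j.castSucc r|
        = -∑ j ∈ Finset.univ.erase r, (μ j.succ r - μ j.castSucc r) := by
      rw [← Finset.sum_neg_distrib]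
      refine Finset.sum_congr rfl (fun j hj => ?_)
      exact abs_of_nonpos (sub_nonpos.mpr (hoffdiag r j (Finset.ne_of_mem_erase hj)))
    rw [habs, sub_neg_eq_add,
      Finset.add_sum_erase _ (fun j : Fin n => μ j.succ r - μ j.castSucc r)
        (Finset.mem_univ r),
      hsum r]
    exact hkey r
  refine ⟨part1, ?_⟩
  apply det_ne_zero_of_sum_col_lt_diag
  intro k
  have h1 := part1 k
  have habs_nonneg : 0 ≤ ∑ j ∈ Finset.univ.erase k, |μ j.succ k - μ j.castSucc k| :=
    Finset.sum_nonneg (fun _ _ => abs_nonneg _)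
  have hdiagpos : 0 < μ k.succ k - μ k.castSucc k := by linarith
  simp only [Matrix.of_apply, Real.norm_eq_abs]
  rw [abs_of_pos hdiagpos]
  linarith


end
end

section
/- Let n ≥ 1, let 0 ≤ x_0 < x_1 < ⋯ < x_n ≤ 1, let ν_1,…,ν_n > 0 and 0 < a_1,…,a_n ≤ 1, and let α_0, α_1, …, α_n > 0. If x_n - x_0 < 1, then there exist a unique constant C > 0 and a unique system of points y_1 ≤ y_2 ≤ ⋯ ≤ y_n with x_j < y_{j+1} < x_{j+1} for each j = 0,…,n-1, such that the function S(t) := C · ∏_{k=1}^n |sin(a_k π (t - y_k))|^{ν_k} satisfies S(x_j) = α_j for all j = 0,1,…,n. Moreover, if a_1 < 1, …, a_n < 1, then the same conclusion holds without the assumption x_n - x_0 < 1. -/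
open Set Filter
open scoped BigOperators Topology

noncomputable section

section TLIdev
open Real

namespace TLI

/-- M-matrix style injectivity: off-diagonal nonnegative entries and strictly negative
column sums force `d = 0` whenever `A d = 0`. -/
lemma mmatrix_nopos {n : ℕ} (A : Fin n → Fin n → ℝ) (d : Fin n → ℝ)
    (hoff : ∀ i k, i ≠ k → 0 ≤ A i k)
    (hcol : ∀ k, ∑ i, A i k < 0)
    (hAd : ∀ i, ∑ k, A i k * d k = 0) : ∀ k, d k ≤ 0 := by
  classical
  by_contra hpos
  push_neg at hpos
  set P : Finset (Fin n) := Finset.univ.filter (fun k => 0 < d k) with hP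
  have hPne : P.Nonempty := by
    obtain ⟨k, hk⟩ := hpos
    exact ⟨k, by simp [hP, hk]⟩
  have h0 : (0:ℝ) = ∑ i ∈ P, ∑ k, A i k * d k := by
    simp [hAd]
  rw [Finset.sum_comm] at h0
  have hterm : ∀ k : Fin n, (∑ i ∈ P, A i k * d k) ≤ 0 := by
    intro k
    rw [← Finset.sum_mul]
    by_cases hk : k ∈ P
    · have hdk : 0 < d k := by simpa [hP] using hk
      have hsum_le : (∑ i, A i k) = (∑ i ∈ P, A i k) + ∑ i ∈ Finset.univ \ P, A i k := by
        rw [← Finset.sum_sdiff (Finset.subset_univ P)]; ring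
      have hrest : 0 ≤ ∑ i ∈ Finset.univ \ P, A i k := by
        apply Finset.sum_nonneg
        intro i hi
        apply hoff
        intro hik
        subst hik
        exact (Finset.mem_sdiff.mp hi).2 hk
      have hPneg : (∑ i ∈ P, A i k) < 0 := by
        have := hcol k
        nlinarith [hsum_le]
      exact le_of_lt (mul_neg_of_neg_of_pos hPneg hdk)
    · have hdk : d k ≤ 0 := by
        by_contra h
        exact hk (by simp [hP, lt_of_not_ge h])
      have hnn : 0 ≤ ∑ i ∈ P, A i k := by
        apply Finset.sum_nonneg
        intro i hi
        apply hoff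
        intro hik
        subst hik
        exact hk hi
      exact mul_nonpos_of_nonneg_of_nonpos hnn hdk
  have hstrict : ∃ k ∈ Finset.univ (α := Fin n), (∑ i ∈ P, A i k * d k) < 0 := by
    obtain ⟨k, hk⟩ := hPne
    refine ⟨k, Finset.mem_univ _, ?_⟩
    rw [← Finset.sum_mul]
    have hdk : 0 < d k := by simpa [hP] using hk
    have hsum_le : (∑ i, A i k) = (∑ i ∈ P, A i k) + ∑ i ∈ Finset.univ \ P, A i k := by
      rw [← Finset.sum_sdiff (Finset.subset_univ P)]; ring
    have hrest : 0 ≤ ∑ i ∈ Finset.univ \ P, A i k := by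
      apply Finset.sum_nonneg
      intro i hi
      apply hoff
      intro hik
      subst hik
      exact (Finset.mem_sdiff.mp hi).2 hk
    have hPneg : (∑ i ∈ P, A i k) < 0 := by
      have := hcol k
      nlinarith [hsum_le]
    exact mul_neg_of_neg_of_pos hPneg hdk
  have : (∑ k : Fin n, ∑ i ∈ P, A i k * d k) < 0 := by
    obtain ⟨k₀, _, hk₀⟩ := hstrict
    calc (∑ k : Fin n, ∑ i ∈ P, A i k * d k)
        < ∑ k : Fin n, (0:ℝ) := by
          apply Finset.sum_lt_sum (fun k _ => hterm k) ⟨k₀, Finset.mem_univ _, hk₀⟩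
      _ = 0 := by simp
  linarith [h0, this]

lemma mmatrix_inj {n : ℕ} (A : Fin n → Fin n → ℝ) (d : Fin n → ℝ)
    (hoff : ∀ i k, i ≠ k → 0 ≤ A i k)
    (hcol : ∀ k, ∑ i, A i k < 0)
    (hAd : ∀ i, ∑ k, A i k * d k = 0) : d = 0 := by
  have h1 := mmatrix_nopos A d hoff hcol hAd
  have h2 := mmatrix_nopos A (-d) hoff hcol (by
    intro i
    have := hAd i
    simp only [Pi.neg_apply, mul_neg, Finset.sum_neg_distrib]
    linarith [hAd i])
  funext k
  have := h1 k
  have := h2 k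
  simp only [Pi.neg_apply] at *
  have : d k = 0 := by
    have h2k := h2 k
    simp at h2k
    linarith [h1 k]
  simpa using this

/-- Cotangent difference identity. -/
lemma cot_sub {θ₁ θ₂ : ℝ} (h1 : Real.sin θ₁ ≠ 0) (h2 : Real.sin θ₂ ≠ 0) :
    Real.cos θ₁ / Real.sin θ₁ - Real.cos θ₂ / Real.sin θ₂
      = Real.sin (θ₂ - θ₁) / (Real.sin θ₁ * Real.sin θ₂) := by
  rw [Real.sin_sub]
  field_simp



structure Setup (n : ℕ) where
  x : Fin (n+1) → ℝ
  ν : Fin n → ℝ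
  a : Fin n → ℝ
  hn : 1 ≤ n
  hx : StrictMono x
  hx01 : ∀ j, x j ∈ Icc (0:ℝ) 1
  hν : ∀ k, 0 < ν k
  ha : ∀ k, 0 < a k ∧ a k ≤ 1
  hgap : ∀ k, a k < 1 ∨ x (Fin.last n) - x 0 < 1

namespace Setup

variable {n : ℕ} (S : Setup n)

/-- `x` reindexed over `ℕ`, constant above `n`. -/
def X (m : ℕ) : ℝ := S.x ⟨min m n, by omega⟩

lemma X_mono : Monotone S.X := by
  intro m m' h
  exact S.hx.monotone (by simp [Fin.mk_le_mk]; omega)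

lemma X_lt {m m' : ℕ} (h : m < m') (h' : m' ≤ n) : S.X m < S.X m' := by
  apply S.hx
  simp [Fin.mk_lt_mk]
  omega

lemma X_zero : S.X 0 = S.x 0 := by
  simp only [X]
  congr 1

lemma X_n : S.X n = S.x (Fin.last n) := by
  simp only [X]
  congr 1
  exact Fin.ext (by simp [Fin.last])

lemma X_castSucc (i : Fin n) : S.x i.castSucc = S.X i := by
  simp only [X]
  congr 1
  exact Fin.ext (by simp [Nat.min_eq_left (le_of_lt i.isLt)])

lemma X_succ (i : Fin n) : S.x i.succ = S.X (i.val + 1) := by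
  simp only [X]
  congr 1
  exact Fin.ext (by simp [Nat.min_eq_left i.isLt])

/-- the span of the nodes -/
def span : ℝ := S.X n - S.X 0

lemma span_pos : 0 < S.span := by
  have := S.X_lt (show 0 < n from S.hn) le_rfl
  simp [span]; linarith

lemma span_le_one : S.span ≤ 1 := by
  have h0 := S.hx01 0
  have hn' := S.hx01 (Fin.last n)
  simp only [mem_Icc] at h0 hn'
  simp only [span, X_zero, X_n]
  linarith [h0.1, hn'.2]

lemma key (k : Fin n) : S.a k * S.span < 1 := by
  rcases S.hgap k with h | h
  · calc S.a k * S.span ≤ S.a k * 1 := by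
          nlinarith [(S.ha k).1, S.span_le_one, S.span_pos]
      _ < 1 := by simpa using h
  · have hspan : S.span < 1 := by
      simp only [span, X_n, X_zero]; linarith
    nlinarith [(S.ha k).1, (S.ha k).2, S.span_pos]

lemma aπ_pos (k : Fin n) : 0 < S.a k * π := mul_pos (S.ha k).1 Real.pi_pos

/-- the log-sine kernel -/
def L (k : Fin n) (s : ℝ) : ℝ := Real.log (Real.sin (S.a k * π * s))

lemma sin_arg_pos (k : Fin n) {s : ℝ} (h0 : 0 < s) (h1 : s ≤ S.span) :
    0 < Real.sin (S.a k * π * s) := by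
  apply Real.sin_pos_of_pos_of_lt_pi
  · exact mul_pos (S.aπ_pos k) h0
  · have h2 : S.a k * s < 1 := by nlinarith [S.key k, (S.ha k).1, S.span_pos]
    calc S.a k * π * s = (S.a k * s) * π := by ring
      _ < 1 * π := by nlinarith [Real.pi_pos]
      _ = π := one_mul π

lemma sin_arg_neg (k : Fin n) {s : ℝ} (h0 : s < 0) (h1 : -s ≤ S.span) :
    Real.sin (S.a k * π * s) < 0 := by
  have := S.sin_arg_pos k (s := -s) (by linarith) h1
  have heq : S.a k * π * s = -(S.a k * π * (-s)) := by ring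
  rw [heq, Real.sin_neg]
  linarith

lemma sin_ne (k : Fin n) {s : ℝ} (h0 : s ≠ 0) (h1 : |s| ≤ S.span) :
    Real.sin (S.a k * π * s) ≠ 0 := by
  rcases lt_or_gt_of_ne h0 with h | h
  · exact ne_of_lt (S.sin_arg_neg k h (by rwa [abs_of_neg h] at h1))
  · exact ne_of_gt (S.sin_arg_pos k h (by rwa [abs_of_pos h] at h1))

lemma L_nonpos (k : Fin n) (s : ℝ) : S.L k s ≤ 0 := by
  rw [L, ← Real.log_abs]
  apply Real.log_nonpos (abs_nonneg _)
  exact Real.abs_sin_le_one _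

lemma hasDerivAt_L (k : Fin n) {s : ℝ} (h : Real.sin (S.a k * π * s) ≠ 0) :
    HasDerivAt (S.L k)
      (S.a k * π * (Real.cos (S.a k * π * s) / Real.sin (S.a k * π * s))) s := by
  have h1 : HasDerivAt (fun u : ℝ => S.a k * π * u) (S.a k * π) s := by
    simpa using (hasDerivAt_id s).const_mul (S.a k * π)
  have h2 : HasDerivAt (fun u : ℝ => Real.sin (S.a k * π * u))
      (Real.cos (S.a k * π * s) * (S.a k * π)) s :=
    (Real.hasDerivAt_sin (S.a k * π * s)).comp s h1
  have h3 := (Real.hasDerivAt_log h).comp s h2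
  refine h3.congr_deriv ?_
  field_simp

lemma contDiffAt_L (k : Fin n) {s : ℝ} (h : Real.sin (S.a k * π * s) ≠ 0) :
    ContDiffAt ℝ 1 (S.L k) s := by
  apply ContDiffAt.comp
  · exact Real.contDiffAt_log.mpr h
  · exact (Real.contDiff_sin.comp (contDiff_const.mul contDiff_id)).contDiffAt

end Setup
end TLI

namespace TLI
namespace Setup

variable {n : ℕ} (S : Setup n)

/-- the open box of admissible node configurations -/
def D : Set (Fin n → ℝ) := {y | ∀ k : Fin n, S.X k < y k ∧ y k < S.X (k.val + 1)}

/-- cotangent at grid point `m` as seen from node `y k` -/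
def ct (y : Fin n → ℝ) (k : Fin n) (m : ℕ) : ℝ :=
  Real.cos (S.a k * π * (S.X m - y k)) / Real.sin (S.a k * π * (S.X m - y k))

/-- entries of (the negative of) the Jacobian matrix -/
def E (y : Fin n → ℝ) (i k : Fin n) : ℝ :=
  S.ν k * (S.a k * π) * (S.ct y k i - S.ct y k (i.val + 1))

/-- the log-ratio map -/
def G (y : Fin n → ℝ) : Fin n → ℝ :=
  fun i => ∑ k, S.ν k * (S.L k (S.X (i.val + 1) - y k) - S.L k (S.X i - y k))

section BoxFacts

variable {S}
variable {y : Fin n → ℝ} (hy : y ∈ S.D)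
include hy

lemma D_lb (k : Fin n) : S.X k < y k := (hy k).1
lemma D_ub (k : Fin n) : y k < S.X (k.val + 1) := (hy k).2

lemma D_gb (k : Fin n) : S.X 0 < y k ∧ y k < S.X n :=
  ⟨lt_of_le_of_lt (S.X_mono (Nat.zero_le _)) (D_lb hy k),
   lt_of_lt_of_le (D_ub hy k) (S.X_mono k.isLt)⟩

lemma arg_neg {m : ℕ} (k : Fin n) (h : m ≤ (k : ℕ)) : S.X m - y k < 0 := by
  have := lt_of_le_of_lt (S.X_mono h) (D_lb hy k); linarith

lemma arg_pos {m : ℕ} (k : Fin n) (h : (k : ℕ) + 1 ≤ m) : 0 < S.X m - y k := by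
  have := lt_of_lt_of_le (D_ub hy k) (S.X_mono h); linarith

lemma arg_ne {m : ℕ} (k : Fin n) : S.X m - y k ≠ 0 := by
  rcases le_or_gt m (k : ℕ) with h | h
  · exact ne_of_lt (arg_neg hy k h)
  · exact ne_of_gt (arg_pos hy k h)

lemma arg_abs_le {m : ℕ} (k : Fin n) (hm : m ≤ n) : |S.X m - y k| ≤ S.span := by
  have h1 := (D_gb hy k).1
  have h2 := (D_gb hy k).2
  have h3 : S.X 0 ≤ S.X m := S.X_mono (Nat.zero_le _)
  have h4 : S.X m ≤ S.X n := S.X_mono hm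
  rw [abs_le]
  constructor <;> simp [span] at * <;> linarith

lemma sin_arg_ne {m : ℕ} (k : Fin n) (hm : m ≤ n) :
    Real.sin (S.a k * π * (S.X m - y k)) ≠ 0 :=
  S.sin_ne k (arg_ne hy k) (arg_abs_le hy k hm)

lemma sin_arg_neg' {m : ℕ} (k : Fin n) (h : m ≤ (k : ℕ)) :
    Real.sin (S.a k * π * (S.X m - y k)) < 0 := by
  apply S.sin_arg_neg k (arg_neg hy k h)
  have := arg_abs_le hy k (le_trans h (le_of_lt k.isLt))
  rw [abs_le] at this; linarith [this.1]

lemma sin_arg_pos' {m : ℕ} (k : Fin n) (h : (k : ℕ) + 1 ≤ m) (hm : m ≤ n) :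
    0 < Real.sin (S.a k * π * (S.X m - y k)) := by
  apply S.sin_arg_pos k (arg_pos hy k h)
  have := arg_abs_le hy k hm
  rw [abs_le] at this; linarith [this.2]

/-- the cotangent difference between two grid points, via the identity -/
lemma ct_sub (k : Fin n) {m m' : ℕ} (hm : m ≤ n) (hm' : m' ≤ n) :
    S.ct y k m - S.ct y k m'
      = Real.sin (S.a k * π * (S.X m' - S.X m)) /
        (Real.sin (S.a k * π * (S.X m - y k)) * Real.sin (S.a k * π * (S.X m' - y k))) := by
  have h1 := sin_arg_ne hy k hm
  have h2 := sin_arg_ne hy k hm'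
  rw [ct, ct, cot_sub h1 h2]
  congr 2
  ring

lemma E_offdiag (i k : Fin n) (hik : i ≠ k) : 0 ≤ S.E y i k := by
  have hi1 : (i : ℕ) + 1 ≤ n := i.isLt
  have hgap : 0 < S.X ((i:ℕ)+1) - S.X i := by
    have := S.X_lt (Nat.lt_succ_self (i:ℕ)) hi1; linarith
  have hgap2 : S.X ((i:ℕ)+1) - S.X i ≤ S.span := by
    have h3 : S.X 0 ≤ S.X i := S.X_mono (Nat.zero_le _)
    have h4 : S.X ((i:ℕ)+1) ≤ S.X n := S.X_mono hi1
    simp [span]; linarith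
  have hnum : 0 < Real.sin (S.a k * π * (S.X ((i:ℕ)+1) - S.X i)) :=
    S.sin_arg_pos k hgap hgap2
  have hden : 0 < Real.sin (S.a k * π * (S.X i - y k)) *
      Real.sin (S.a k * π * (S.X ((i:ℕ)+1) - y k)) := by
    rcases lt_or_gt_of_ne (Fin.val_ne_of_ne hik) with h | h
    · -- i < k : both arguments negative
      have s1 := sin_arg_neg' hy k (le_of_lt h)
      have s2 := sin_arg_neg' hy (m := (i:ℕ)+1) k (by omega)
      exact mul_pos_of_neg_of_neg s1 s2
    · -- k < i : both arguments positive
      have s1 := sin_arg_pos' hy k (by omega) (le_trans (Nat.le_succ _) hi1)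
      have s2 := sin_arg_pos' hy k (by omega) hi1
      exact mul_pos s1 s2
  rw [E, ct_sub hy k (le_trans (Nat.le_succ _) hi1) hi1]
  exact mul_nonneg (mul_nonneg (S.hν k).le (S.aπ_pos k).le) (div_nonneg hnum.le hden.le)

lemma E_colsum (hn' : 1 ≤ n) (k : Fin n) : ∑ i, S.E y i k < 0 := by
  have hsum : ∑ i : Fin n, (S.ct y k i - S.ct y k ((i:ℕ) + 1))
      = S.ct y k 0 - S.ct y k n := by
    rw [Fin.sum_univ_eq_sum_range (fun m => S.ct y k m - S.ct y k (m+1)) n]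
    exact Finset.sum_range_sub' (fun m => S.ct y k m) n
  have : ∑ i, S.E y i k = S.ν k * (S.a k * π) * (S.ct y k 0 - S.ct y k n) := by
    simp only [E]
    rw [← hsum, Finset.mul_sum]
  rw [this, ct_sub hy k (Nat.zero_le _) le_rfl]
  have hnum : 0 < Real.sin (S.a k * π * (S.X n - S.X 0)) := by
    apply S.sin_arg_pos k S.span_pos
    simp [span]
  have s1 := sin_arg_neg' hy k (Nat.zero_le _)
  have s2 := sin_arg_pos' hy k k.isLt le_rfl
  have hden : Real.sin (S.a k * π * (S.X 0 - y k)) *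
      Real.sin (S.a k * π * (S.X n - y k)) < 0 := mul_neg_of_neg_of_pos s1 s2
  have hq : Real.sin (S.a k * π * (S.X n - S.X 0)) /
      (Real.sin (S.a k * π * (S.X 0 - y k)) * Real.sin (S.a k * π * (S.X n - y k))) < 0 :=
    div_neg_of_pos_of_neg hnum hden
  exact mul_neg_of_pos_of_neg (mul_pos (S.hν k) (S.aπ_pos k)) hq

end BoxFacts
end Setup
end TLI

namespace TLI
namespace Setup

variable {n : ℕ} (S : Setup n)

lemma hasDerivAt_L_line (k : Fin n) (c w δ t : ℝ)
    (hs : Real.sin (S.a k * π * (c - (w + t * δ))) ≠ 0) :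
    HasDerivAt (fun u => S.L k (c - (w + u * δ)))
      (S.a k * π * (Real.cos (S.a k * π * (c - (w + t * δ))) /
        Real.sin (S.a k * π * (c - (w + t * δ)))) * (-δ)) t := by
  have hinner : HasDerivAt (fun u : ℝ => c - (w + u * δ)) (-δ) t := by
    have h := (hasDerivAt_const t c).sub
      ((hasDerivAt_const t w).add ((hasDerivAt_id t).mul_const δ))
    simpa [Pi.sub_def, Pi.add_def] using h
  exact HasDerivAt.comp (h₂ := S.L k) t (S.hasDerivAt_L k hs) hinner

variable {S}

section Line

variable {y d : Fin n → ℝ}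

lemma line_apply (t : ℝ) (k : Fin n) : (y + t • d) k = y k + t * d k := rfl

lemma hasDerivAt_G_line {t : ℝ} (hw : y + t • d ∈ S.D) (i : Fin n) :
    HasDerivAt (fun s => S.G (y + s • d) i) (∑ k, S.E (y + t • d) i k * d k) t := by
  have hfun : (fun s => S.G (y + s • d) i)
      = fun s => ∑ k, S.ν k * (S.L k (S.X ((i:ℕ)+1) - (y k + s * d k))
          - S.L k (S.X (i:ℕ) - (y k + s * d k))) := rfl
  rw [hfun]
  have hmain : HasDerivAt
      (fun s => ∑ k, S.ν k * (S.L k (S.X ((i:ℕ)+1) - (y k + s * d k))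
          - S.L k (S.X (i:ℕ) - (y k + s * d k))))
      (∑ k, S.ν k *
        (S.a k * π * (Real.cos (S.a k * π * (S.X ((i:ℕ)+1) - (y k + t * d k))) /
          Real.sin (S.a k * π * (S.X ((i:ℕ)+1) - (y k + t * d k)))) * (-(d k))
        - S.a k * π * (Real.cos (S.a k * π * (S.X (i:ℕ) - (y k + t * d k))) /
          Real.sin (S.a k * π * (S.X (i:ℕ) - (y k + t * d k)))) * (-(d k)))) t := by
    apply HasDerivAt.fun_sum
    intro k _
    have h1 := S.hasDerivAt_L_line k (S.X ((i:ℕ)+1)) (y k) (d k) t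
      (sin_arg_ne hw k i.isLt)
    have h2 := S.hasDerivAt_L_line k (S.X (i:ℕ)) (y k) (d k) t
      (sin_arg_ne hw k (le_of_lt i.isLt))
    exact (h1.sub h2).const_mul (S.ν k)
  convert hmain using 1
  apply Finset.sum_congr rfl
  intro k _
  simp only [E, ct, line_apply]
  ring

lemma contOn_E_line (hseg : ∀ t ∈ uIcc (0:ℝ) 1, y + t • d ∈ S.D) (i k : Fin n) :
    ContinuousOn (fun t => S.E (y + t • d) i k) (uIcc (0:ℝ) 1) := by
  have hc : ∀ m : ℕ, m ≤ n → ContinuousOn (fun t => S.ct (y + t • d) k m) (uIcc (0:ℝ) 1) := by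
    intro m hm
    apply ContinuousOn.div
    · exact (Real.continuous_cos.comp (by continuity)).continuousOn
    · exact (Real.continuous_sin.comp (by continuity)).continuousOn
    · intro t ht
      exact sin_arg_ne (hseg t ht) k hm
  have h1 := hc (i:ℕ) (le_of_lt i.isLt)
  have h2 := hc ((i:ℕ)+1) i.isLt
  exact (continuousOn_const.mul (h1.sub h2))

theorem G_inj {y y' : Fin n → ℝ} (hy : y ∈ S.D) (hy' : y' ∈ S.D)
    (h : S.G y = S.G y') : y = y' := by
  classical
  set d : Fin n → ℝ := y' - y with hd
  have hyd1 : y + (1:ℝ) • d = y' := by funext k; simp [hd]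
  have hyd0 : y + (0:ℝ) • d = y := by funext k; simp [hd]
  have hseg : ∀ t ∈ uIcc (0:ℝ) 1, y + t • d ∈ S.D := by
    intro t ht
    rw [uIcc_of_le (by norm_num : (0:ℝ) ≤ 1)] at ht
    intro k
    have h1 := (hy k).1
    have h2 := (hy k).2
    have h1' := (hy' k).1
    have h2' := (hy' k).2
    have ht0 := ht.1
    have ht1 := ht.2
    have hcomb : y k + t * d k = (1 - t) * y k + t * y' k := by simp [hd]; ring
    constructor
    · rw [line_apply, hcomb]
      rcases lt_or_ge t 1 with hlt | hge
      · nlinarith [mul_pos (show (0:ℝ) < 1 - t by linarith) (show (0:ℝ) < y k - S.X k by linarith),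
          mul_nonneg ht0 (show (0:ℝ) ≤ y' k - S.X k by linarith)]
      · have : t = 1 := le_antisymm ht1 hge
        subst this; linarith
    · rw [line_apply, hcomb]
      rcases lt_or_ge t 1 with hlt | hge
      · nlinarith [mul_pos (show (0:ℝ) < 1 - t by linarith) (show (0:ℝ) < S.X ((k:ℕ)+1) - y k by linarith),
          mul_nonneg ht0 (show (0:ℝ) ≤ S.X ((k:ℕ)+1) - y' k by linarith)]
      · have : t = 1 := le_antisymm ht1 hge
        subst this; linarith
  set A : Fin n → Fin n → ℝ := fun i k => ∫ t in (0:ℝ)..1, S.E (y + t • d) i k with hA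
  have hint : ∀ i k : Fin n, IntervalIntegrable (fun t => S.E (y + t • d) i k)
      MeasureTheory.volume 0 1 :=
    fun i k => (contOn_E_line hseg i k).intervalIntegrable
  have hint2 : ∀ i, IntervalIntegrable (fun t => ∑ k, S.E (y + t • d) i k * d k)
      MeasureTheory.volume 0 1 := by
    intro i
    have h := IntervalIntegrable.sum (μ := MeasureTheory.volume) (a := (0:ℝ)) (b := (1:ℝ))
      Finset.univ (f := fun (k : Fin n) (t : ℝ) => S.E (y + t • d) i k * d k)
      (fun k _ => (hint i k).mul_const (d k))
    simpa [Finset.sum_fn] using h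
  have hFTC : ∀ i, ∑ k, A i k * d k = 0 := by
    intro i
    have hderiv : ∀ t ∈ uIcc (0:ℝ) 1,
        HasDerivAt (fun s => S.G (y + s • d) i) (∑ k, S.E (y + t • d) i k * d k) t :=
      fun t ht => hasDerivAt_G_line (hseg t ht) i
    have heq := intervalIntegral.integral_eq_sub_of_hasDerivAt hderiv (hint2 i)
    simp only [hyd1, hyd0, h] at heq
    have hswap : (∫ t in (0:ℝ)..1, ∑ k, S.E (y + t • d) i k * d k) = ∑ k, A i k * d k := by
      rw [intervalIntegral.integral_finset_sum (fun k _ => (hint i k).mul_const (d k))]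
      exact Finset.sum_congr rfl (fun k _ => intervalIntegral.integral_mul_const _ _)
    rw [hswap] at heq
    simpa using heq
  have hoff : ∀ i k, i ≠ k → 0 ≤ A i k := by
    intro i k hik
    apply intervalIntegral.integral_nonneg (by norm_num)
    intro t ht
    have ht' : t ∈ uIcc (0:ℝ) 1 := by rwa [uIcc_of_le (by norm_num : (0:ℝ) ≤ 1)]
    exact E_offdiag (hseg t ht') i k hik
  have hcol : ∀ k, ∑ i, A i k < 0 := by
    intro k
    have h1 : ∑ i, A i k = ∫ t in (0:ℝ)..1, ∑ i, S.E (y + t • d) i k :=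
      (intervalIntegral.integral_finset_sum (fun i _ => hint i k)).symm
    have hintsum : IntervalIntegrable (fun t => ∑ i, S.E (y + t • d) i k)
        MeasureTheory.volume 0 1 := by
      have h := IntervalIntegrable.sum (μ := MeasureTheory.volume) (a := (0:ℝ)) (b := (1:ℝ))
        Finset.univ (f := fun (i : Fin n) (t : ℝ) => S.E (y + t • d) i k)
        (fun i _ => hint i k)
      simpa [Finset.sum_fn] using h
    have h2 : 0 < ∫ t in (0:ℝ)..1, -(∑ i, S.E (y + t • d) i k) := by
      apply intervalIntegral.intervalIntegral_pos_of_pos_on hintsum.neg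
      · intro t ht
        have ht' : t ∈ uIcc (0:ℝ) 1 := by
          rw [uIcc_of_le (by norm_num : (0:ℝ) ≤ 1)]
          exact ⟨ht.1.le, ht.2.le⟩
        have := E_colsum (hseg t ht') S.hn k
        simp only [Pi.neg_apply]
        linarith
      · norm_num
    rw [intervalIntegral.integral_neg] at h2
    linarith [h1 ▸ (by linarith : (∫ t in (0:ℝ)..1, ∑ i, S.E (y + t • d) i k) < 0)]
  have hd0 : d = 0 := mmatrix_inj A d hoff hcol hFTC
  funext k
  have : y' k - y k = 0 := by
    have := congrFun hd0 k
    simpa [hd] using this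
  linarith

end Line
end Setup
end TLI

namespace TLI
namespace Setup

variable {n : ℕ} {S : Setup n}

lemma D_eq : S.D = Set.univ.pi (fun k : Fin n => Ioo (S.X (k:ℕ)) (S.X ((k:ℕ)+1))) := by
  ext y
  simp [D, Set.mem_univ_pi, mem_Ioo]

lemma isOpen_D : IsOpen S.D := by
  rw [D_eq]
  exact isOpen_set_pi finite_univ (fun k _ => isOpen_Ioo)

/-- the candidate derivative of `G` at `y`, as a continuous linear map -/
def Lmap (S : Setup n) (y : Fin n → ℝ) : (Fin n → ℝ) →L[ℝ] (Fin n → ℝ) :=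
  ContinuousLinearMap.pi (fun i => ∑ k, S.E y i k • (ContinuousLinearMap.proj k))

lemma Lmap_apply (y v : Fin n → ℝ) (i : Fin n) :
    S.Lmap y v i = ∑ k, S.E y i k * v k := by
  simp [Lmap]

lemma contDiffAt_G {y : Fin n → ℝ} (hy : y ∈ S.D) : ContDiffAt ℝ 1 S.G y := by
  rw [contDiffAt_pi]
  intro i
  apply ContDiffAt.sum
  intro k _
  apply ContDiffAt.mul contDiffAt_const
  have hc : ∀ m : ℕ, m ≤ n → ContDiffAt ℝ 1 (fun w : Fin n → ℝ => S.L k (S.X m - w k)) y := by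
    intro m hm
    have hinner : ContDiff ℝ 1 (fun w : Fin n → ℝ => S.X m - w k) :=
      contDiff_const.sub (ContinuousLinearMap.proj k : (Fin n → ℝ) →L[ℝ] ℝ).contDiff
    exact ContDiffAt.comp (g := S.L k) y (S.contDiffAt_L k (sin_arg_ne hy k hm)) hinner.contDiffAt
  exact (hc ((i:ℕ)+1) i.isLt).sub (hc (i:ℕ) (le_of_lt i.isLt))

lemma hasFDerivAt_G {y : Fin n → ℝ} (hy : y ∈ S.D) : HasFDerivAt S.G (S.Lmap y) y := by
  have hterm : ∀ (i : Fin n), ∀ k : Fin n, k ∈ Finset.univ → HasFDerivAt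
      (fun w : Fin n → ℝ => S.ν k * (S.L k (S.X ((i:ℕ)+1) - w k) - S.L k (S.X (i:ℕ) - w k)))
      (S.E y i k • (ContinuousLinearMap.proj k : (Fin n → ℝ) →L[ℝ] ℝ)) y := by
    intro i k _
    have hm : ∀ m : ℕ, m ≤ n → HasFDerivAt (fun w : Fin n → ℝ => S.L k (S.X m - w k))
        ((S.a k * π * (S.ct y k m)) •
          (-(ContinuousLinearMap.proj k : (Fin n → ℝ) →L[ℝ] ℝ))) y := by
      intro m hm
      have hinner : HasFDerivAt (fun w : Fin n → ℝ => S.X m - w k)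
          (-(ContinuousLinearMap.proj k : (Fin n → ℝ) →L[ℝ] ℝ)) y := by
        have := (hasFDerivAt_const (S.X m) y).sub
          ((ContinuousLinearMap.proj k : (Fin n → ℝ) →L[ℝ] ℝ).hasFDerivAt (x := y))
        simpa [Pi.sub_def] using this
      exact HasDerivAt.comp_hasFDerivAt (h₂ := S.L k) y (S.hasDerivAt_L k (sin_arg_ne hy k hm)) hinner
    have h1 := hm ((i:ℕ)+1) i.isLt
    have h2 := hm (i:ℕ) (le_of_lt i.isLt)
    have h3 := (h1.sub h2).const_mul (S.ν k)
    refine h3.congr_fderiv ?_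
    ext v
    simp only [ContinuousLinearMap.smul_apply, ContinuousLinearMap.sub_apply,
      ContinuousLinearMap.neg_apply, ContinuousLinearMap.proj_apply, smul_eq_mul, E]
    ring
  have hsum : ∀ i : Fin n, HasFDerivAt
      (fun w : Fin n → ℝ => ∑ k, S.ν k * (S.L k (S.X ((i:ℕ)+1) - w k)
        - S.L k (S.X (i:ℕ) - w k)))
      (∑ k, S.E y i k • (ContinuousLinearMap.proj k : (Fin n → ℝ) →L[ℝ] ℝ)) y :=
    fun i => HasFDerivAt.fun_sum (hterm i)
  exact hasFDerivAt_pi.mpr hsum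

lemma Lmap_inj {y : Fin n → ℝ} (hy : y ∈ S.D) : Function.Injective (S.Lmap y) := by
  have hker : ∀ v, S.Lmap y v = 0 → v = 0 := by
    intro v hv
    apply mmatrix_inj (S.E y) v (fun i k => E_offdiag hy i k) (fun k => E_colsum hy S.hn k)
    intro i
    have := congrFun hv i
    rw [Lmap_apply] at this
    simpa using this
  intro v w hvw
  have : S.Lmap y (v - w) = 0 := by rw [map_sub, hvw, sub_self]
  have := hker _ this
  exact sub_eq_zero.mp this

lemma map_nhds_G {y : Fin n → ℝ} (hy : y ∈ S.D) : map S.G (𝓝 y) = 𝓝 (S.G y) := by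
  have hstrict : HasStrictFDerivAt S.G (S.Lmap y) y := by
    have h := (contDiffAt_G hy).hasStrictFDerivAt one_ne_zero
    rwa [(hasFDerivAt_G hy).fderiv] at h
  have hbij : Function.Bijective (S.Lmap y) := by
    have hinj := Lmap_inj hy
    refine ⟨hinj, ?_⟩
    have := (LinearMap.injective_iff_surjective
      (f := (S.Lmap y : (Fin n → ℝ) →ₗ[ℝ] Fin n → ℝ))).mp hinj
    exact this
  let eL : (Fin n → ℝ) ≃ₗ[ℝ] (Fin n → ℝ) :=
    LinearEquiv.ofBijective (S.Lmap y : (Fin n → ℝ) →ₗ[ℝ] Fin n → ℝ) hbij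
  let eC : (Fin n → ℝ) ≃L[ℝ] (Fin n → ℝ) := eL.toContinuousLinearEquiv
  have hcoe : (eC : (Fin n → ℝ) →L[ℝ] (Fin n → ℝ)) = S.Lmap y := by
    ext v
    rfl
  exact HasStrictFDerivAt.map_nhds_eq_of_equiv (f' := eC) (by rwa [hcoe])

lemma isOpen_image_G : IsOpen (S.G '' S.D) := by
  rw [isOpen_iff_mem_nhds]
  rintro z ⟨y, hy, rfl⟩
  rw [← map_nhds_G hy, mem_map]
  exact mem_of_superset (isOpen_D.mem_nhds hy) (subset_preimage_image _ _)

end Setup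
end TLI

namespace TLI
namespace Setup

variable {n : ℕ} {S : Setup n}

/-- the closed box -/
def Dcl (S : Setup n) : Set (Fin n → ℝ) :=
  Set.univ.pi (fun k : Fin n => Icc (S.X (k:ℕ)) (S.X ((k:ℕ)+1)))

lemma D_subset_Dcl : S.D ⊆ S.Dcl := by
  intro y hy
  rw [Dcl, Set.mem_univ_pi]
  exact fun k => ⟨(hy k).1.le, (hy k).2.le⟩

lemma isCompact_Dcl : IsCompact S.Dcl :=
  isCompact_univ_pi (fun k => isCompact_Icc)

/-- weighted potential at grid point `m` -/
def F (S : Setup n) (y : Fin n → ℝ) (m : ℕ) : ℝ := ∑ k, S.ν k * S.L k (S.X m - y k)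

lemma F_nonpos (y : Fin n → ℝ) (m : ℕ) : S.F y m ≤ 0 :=
  Finset.sum_nonpos fun k _ =>
    mul_nonpos_of_nonneg_of_nonpos (S.hν k).le (S.L_nonpos k _)

lemma G_eq_F (y : Fin n → ℝ) (i : Fin n) : S.G y i = S.F y ((i:ℕ)+1) - S.F y (i:ℕ) := by
  simp only [G, F, ← Finset.sum_sub_distrib]
  exact Finset.sum_congr rfl fun k _ => by ring

lemma continuousAt_L (k : Fin n) {s : ℝ} (h : Real.sin (S.a k * π * s) ≠ 0) :
    ContinuousAt (S.L k) s :=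
  (S.contDiffAt_L k h).continuousAt

section Sequences

variable {yseq : ℕ → (Fin n → ℝ)} {ybar : Fin n → ℝ}
variable (hseq : ∀ i, yseq i ∈ S.D) (hcl : ybar ∈ S.Dcl)
variable (hconv : Tendsto yseq atTop (𝓝 ybar))

include hcl in
lemma ybar_bounds (k : Fin n) : S.X (k:ℕ) ≤ ybar k ∧ ybar k ≤ S.X ((k:ℕ)+1) := by
  have := hcl
  rw [Dcl, Set.mem_univ_pi] at this
  exact ⟨(this k).1, (this k).2⟩

include hcl in
lemma ybar_arg_abs_le (k : Fin n) {m : ℕ} (hm : m ≤ n) : |S.X m - ybar k| ≤ S.span := by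
  obtain ⟨h1, h2⟩ := ybar_bounds hcl k
  have h3 : S.X 0 ≤ S.X m := S.X_mono (Nat.zero_le _)
  have h4 : S.X m ≤ S.X n := S.X_mono hm
  have h5 : S.X 0 ≤ S.X (k:ℕ) := S.X_mono (Nat.zero_le _)
  have h6 : S.X ((k:ℕ)+1) ≤ S.X n := S.X_mono k.isLt
  rw [abs_le]
  constructor <;> simp [span] <;> linarith

include hcl hconv in
lemma F_tendsto_finite {p : ℕ} (hp : p ≤ n) (hmiss : ∀ k, ybar k ≠ S.X p) :
    Tendsto (fun i => S.F (yseq i) p) atTop (𝓝 (S.F ybar p)) := by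
  apply tendsto_finset_sum
  intro k _
  have hne : S.X p - ybar k ≠ 0 := fun h => hmiss k (by linarith [sub_eq_zero.mp h])
  have hsin : Real.sin (S.a k * π * (S.X p - ybar k)) ≠ 0 :=
    S.sin_ne k hne (ybar_arg_abs_le hcl k hp)
  have hk : Tendsto (fun i => yseq i k) atTop (𝓝 (ybar k)) :=
    ((continuous_apply k).tendsto ybar).comp hconv
  have harg : Tendsto (fun i => S.X p - yseq i k) atTop (𝓝 (S.X p - ybar k)) :=
    tendsto_const_nhds.sub hk
  exact (tendsto_const_nhds.mul ((continuousAt_L k hsin).tendsto.comp harg))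

include hseq hconv in
lemma F_tendsto_atBot {q : ℕ} (hq : q ≤ n) {k₀ : Fin n} (hk₀ : ybar k₀ = S.X q) :
    Tendsto (fun i => S.F (yseq i) q) atTop atBot := by
  have hbd : ∀ i, S.F (yseq i) q ≤ S.ν k₀ * S.L k₀ (S.X q - yseq i k₀) := by
    intro i
    rw [F, ← Finset.sum_erase_add _ _ (Finset.mem_univ k₀)]
    have : ∑ k ∈ Finset.univ.erase k₀, S.ν k * S.L k (S.X q - yseq i k) ≤ 0 :=
      Finset.sum_nonpos fun k _ =>
        mul_nonpos_of_nonneg_of_nonpos (S.hν k).le (S.L_nonpos k _)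
    linarith
  apply tendsto_atBot_mono hbd
  have hk : Tendsto (fun i => yseq i k₀) atTop (𝓝 (ybar k₀)) :=
    ((continuous_apply k₀).tendsto ybar).comp hconv
  have harg : Tendsto (fun i => S.X q - yseq i k₀) atTop (𝓝 0) := by
    have := tendsto_const_nhds (x := S.X q) (f := atTop (α := ℕ)) |>.sub hk
    rw [hk₀] at this
    simpa using this
  have hsin0 : Tendsto (fun i => Real.sin (S.a k₀ * π * (S.X q - yseq i k₀))) atTop (𝓝 0) := by
    have hc : Continuous (fun s : ℝ => Real.sin (S.a k₀ * π * s)) := by continuity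
    have := (hc.tendsto 0).comp harg
    simpa [Function.comp_def] using this
  have hsinne : ∀ i, Real.sin (S.a k₀ * π * (S.X q - yseq i k₀)) ≠ 0 := by
    intro i
    exact S.sin_ne k₀ (arg_ne (hseq i) k₀) (arg_abs_le (hseq i) k₀ hq)
  have hlog : Tendsto (fun i => S.L k₀ (S.X q - yseq i k₀)) atTop atBot := by
    apply Real.tendsto_log_nhdsNE_zero.comp
    apply tendsto_nhdsWithin_of_tendsto_nhds_of_eventually_within _ hsin0
    exact Eventually.of_forall fun i => hsinne i
  exact hlog.const_mul_atBot (S.hν k₀)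

end Sequences

/-- the grid function `X` is injective on `{0,…,n}` -/
lemma X_inj {m m' : ℕ} (hm : m ≤ n) (hm' : m' ≤ n) (h : S.X m = S.X m') : m = m' := by
  by_contra hne
  rcases Nat.lt_or_ge m m' with hlt | hge
  · exact absurd h (ne_of_lt (S.X_lt hlt hm'))
  · have : m' < m := by omega
    exact absurd h.symm (ne_of_lt (S.X_lt this hm))

lemma isClosed_image_G : IsClosed (S.G '' S.D) := by
  apply isClosed_of_closure_subset
  intro z hz
  obtain ⟨u, hu, hulim⟩ := mem_closure_iff_seq_limit.mp hz
  choose yseq hyD hyG using hu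
  obtain ⟨ybar, hybarcl, φ, hφ, hconv⟩ :=
    isCompact_Dcl.tendsto_subseq (fun i => D_subset_Dcl (hyD i))
  have hseq' : ∀ i, (yseq ∘ φ) i ∈ S.D := fun i => hyD (φ i)
  have hulim' : Tendsto (u ∘ φ) atTop (𝓝 z) := hulim.comp hφ.tendsto_atTop
  -- main claim : the limit lies in the open box
  have hybarD : ybar ∈ S.D := by
    by_contra hnot
    -- some coordinate touches the grid
    have hhit : ∃ q ≤ n, ∃ k₀ : Fin n, ybar k₀ = S.X q := by
      simp only [D, Set.mem_setOf_eq, not_forall] at hnot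
      obtain ⟨k, hk⟩ := hnot
      obtain ⟨h1, h2⟩ := ybar_bounds hybarcl k
      rcases eq_or_lt_of_le h1 with he | hlt1
      · exact ⟨(k:ℕ), le_of_lt k.isLt, k, he.symm⟩
      rcases eq_or_lt_of_le h2 with he | hlt2
      · exact ⟨(k:ℕ)+1, k.isLt, k, he⟩
      exact absurd ⟨hlt1, hlt2⟩ hk
    have hmiss : ∃ p ≤ n, ∀ k, ybar k ≠ S.X p := by
      by_contra hmiss'
      push_neg at hmiss'
      have hch : ∀ p : Fin (n+1), ∃ k : Fin n, ybar k = S.X (p:ℕ) := by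
        intro p
        obtain ⟨k, hk⟩ := hmiss' (p:ℕ) (by omega)
        exact ⟨k, hk⟩
      choose g hg using hch
      have hginj : Function.Injective g := by
        intro p p' hpp'
        have : S.X (p:ℕ) = S.X (p':ℕ) := by rw [← hg p, ← hg p', hpp']
        have := X_inj (by omega) (by omega) this
        exact Fin.ext this
      have := Fintype.card_le_of_injective g hginj
      simp at this
    obtain ⟨q, hq, k₀, hk₀⟩ := hhit
    obtain ⟨p, hp, hpmiss⟩ := hmiss
    have hFq : Tendsto (fun i => S.F ((yseq ∘ φ) i) q) atTop atBot :=
      F_tendsto_atBot hseq' hconv hq hk₀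
    have hFp : Tendsto (fun i => S.F ((yseq ∘ φ) i) p) atTop (𝓝 (S.F ybar p)) :=
      F_tendsto_finite hybarcl hconv hp hpmiss
    have hpq : p ≠ q := fun h => hpmiss k₀ (h ▸ hk₀)
    -- block sums of components of G over [min p q, max p q)
    -- T w: partial sum of the coordinates of a target vector
    set lo := min p q with hlo
    set hi := max p q with hhi
    have hblock : ∀ j, (∑ m ∈ Finset.Ico lo hi, (fun m' => if h : m' < n then
        S.G (yseq j) ⟨m', h⟩ else 0) m) = S.F (yseq j) hi - S.F (yseq j) lo := by
      intro j
      have hhin : hi ≤ n := by omega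
      have : ∀ m ∈ Finset.Ico lo hi, (if h : m < n then S.G (yseq j) ⟨m, h⟩ else 0)
          = S.F (yseq j) (m+1) - S.F (yseq j) m := by
        intro m hm
        simp only [Finset.mem_Ico] at hm
        have hmn : m < n := by omega
        rw [dif_pos hmn]
        exact G_eq_F (yseq j) ⟨m, hmn⟩
      rw [Finset.sum_congr rfl this]
      rw [Finset.sum_Ico_eq_sub _ (by omega : lo ≤ hi),
        Finset.sum_range_sub (fun m => S.F (yseq j) m),
        Finset.sum_range_sub (fun m => S.F (yseq j) m)]
      ring
    -- the block sum converges since G (yseq j) = u j → z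
    have hblocklim : Tendsto (fun i => S.F ((yseq ∘ φ) i) hi - S.F ((yseq ∘ φ) i) lo)
        atTop (𝓝 (∑ m ∈ Finset.Ico lo hi, (fun m' => if h : m' < n then z ⟨m', h⟩ else 0) m)) := by
      have : ∀ i, S.F ((yseq ∘ φ) i) hi - S.F ((yseq ∘ φ) i) lo
          = ∑ m ∈ Finset.Ico lo hi, (fun m' => if h : m' < n then
              (u (φ i)) ⟨m', h⟩ else 0) m := by
        intro i
        simp only [Function.comp_apply]
        rw [← hblock (φ i)]
        apply Finset.sum_congr rfl
        intro m hm
        by_cases hmn : m < n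
        · simp only [dif_pos hmn, Function.comp_apply, hyG]
        · simp only [dif_neg hmn]
      rw [funext this]
      apply tendsto_finset_sum
      intro m hm
      by_cases hmn : m < n
      · simp only [dif_pos hmn]
        exact ((continuous_apply (⟨m, hmn⟩ : Fin n)).tendsto z).comp hulim'
      · simp only [dif_neg hmn]
        exact tendsto_const_nhds
    -- but the block sum diverges
    rcases lt_or_gt_of_ne hpq with hplt | hqlt
    · -- p < q : lo = p, hi = q; F hi → -∞, F lo → finite; difference → -∞
      have hlo' : lo = p := by omega
      have hhi' : hi = q := by omega
      rw [hlo', hhi'] at hblocklim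
      have hdiff : Tendsto (fun i => S.F ((yseq ∘ φ) i) q - S.F ((yseq ∘ φ) i) p)
          atTop atBot := by
        have hev : ∀ᶠ i in atTop, S.F ((yseq ∘ φ) i) q - S.F ((yseq ∘ φ) i) p
            ≤ S.F ((yseq ∘ φ) i) q - (S.F ybar p - 1) := by
          filter_upwards [hFp.eventually (eventually_ge_nhds
            (by linarith : S.F ybar p - 1 < S.F ybar p))] with i hi'
          linarith
        apply tendsto_atBot_mono' _ hev
        have h2 := hFq.atBot_add (tendsto_const_nhds (x := 1 - S.F ybar p)
          (f := atTop (α := ℕ)))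
        simpa [sub_eq_add_neg, neg_sub] using h2
      exact not_tendsto_atBot_of_tendsto_nhds hblocklim hdiff
    · -- q < p : lo = q, hi = p; F hi → finite, F lo → -∞; difference → +∞
      have hlo' : lo = q := by omega
      have hhi' : hi = p := by omega
      rw [hlo', hhi'] at hblocklim
      have hdiff : Tendsto (fun i => S.F ((yseq ∘ φ) i) p - S.F ((yseq ∘ φ) i) q)
          atTop atTop := by
        have hev : ∀ᶠ i in atTop, (S.F ybar p - 1) - S.F ((yseq ∘ φ) i) q
            ≤ S.F ((yseq ∘ φ) i) p - S.F ((yseq ∘ φ) i) q := by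
          filter_upwards [hFp.eventually (eventually_ge_nhds
            (by linarith : S.F ybar p - 1 < S.F ybar p))] with i hi'
          linarith
        apply tendsto_atTop_mono' _ hev
        have hneg : Tendsto (fun i => -(S.F ((yseq ∘ φ) i) q)) atTop atTop :=
          tendsto_neg_atBot_atTop.comp hFq
        have h2 := tendsto_atTop_add_const_left atTop (S.F ybar p - 1) hneg
        simpa [sub_eq_add_neg] using h2
      exact not_tendsto_atTop_of_tendsto_nhds hblocklim hdiff
  -- conclude
  refine ⟨ybar, hybarD, ?_⟩
  have hGcont : Tendsto (fun i => S.G ((yseq ∘ φ) i)) atTop (𝓝 (S.G ybar)) :=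
    ((contDiffAt_G hybarD).continuousAt.tendsto).comp hconv
  have : Tendsto (fun i => u (φ i)) atTop (𝓝 (S.G ybar)) := by
    have heq : (fun i => S.G ((yseq ∘ φ) i)) = fun i => u (φ i) := by
      funext i; exact hyG (φ i)
    rwa [heq] at hGcont
  exact (tendsto_nhds_unique hulim' this).symm

lemma D_nonempty : S.D.Nonempty := by
  refine ⟨fun k => (S.X (k:ℕ) + S.X ((k:ℕ)+1)) / 2, fun k => ?_⟩
  have := S.X_lt (Nat.lt_succ_self (k:ℕ)) k.isLt
  constructor <;> simp <;> linarith

theorem G_surj : ∀ z : Fin n → ℝ, ∃ y ∈ S.D, S.G y = z := by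
  have hclopen : IsClopen (S.G '' S.D) := ⟨isClosed_image_G, isOpen_image_G⟩
  have huniv : S.G '' S.D = Set.univ :=
    hclopen.eq_univ (D_nonempty.image S.G)
  intro z
  have : z ∈ S.G '' S.D := huniv ▸ Set.mem_univ z
  obtain ⟨y, hy, hyz⟩ := this
  exact ⟨y, hy, hyz⟩

end Setup
end TLI

namespace TLI
namespace Setup

variable {n : ℕ} {S : Setup n}

/-- value of the product at node `x j` -/
def Pval (S : Setup n) (y : Fin n → ℝ) (j : Fin (n+1)) : ℝ :=
  ∏ k, |Real.sin (S.a k * π * (S.x j - y k))| ^ (S.ν k)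

lemma X_fin (j : Fin (n+1)) : S.X (j:ℕ) = S.x j := by
  simp only [X]
  congr 1
  exact Fin.ext (by simp [Nat.min_eq_left (Nat.lt_succ_iff.mp j.isLt)])

lemma sin_xj_ne {y : Fin n → ℝ} (hy : y ∈ S.D) (j : Fin (n+1)) (k : Fin n) :
    Real.sin (S.a k * π * (S.x j - y k)) ≠ 0 := by
  rw [← X_fin]
  exact sin_arg_ne hy k (Nat.lt_succ_iff.mp j.isLt)

lemma Pval_pos {y : Fin n → ℝ} (hy : y ∈ S.D) (j : Fin (n+1)) : 0 < S.Pval y j := by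
  apply Finset.prod_pos
  intro k _
  exact Real.rpow_pos_of_pos (abs_pos.mpr (sin_xj_ne hy j k)) _

lemma log_Pval {y : Fin n → ℝ} (hy : y ∈ S.D) (j : Fin (n+1)) :
    Real.log (S.Pval y j) = ∑ k, S.ν k * S.L k (S.x j - y k) := by
  rw [Pval, Real.log_prod]
  · apply Finset.sum_congr rfl
    intro k _
    rw [Real.log_rpow (abs_pos.mpr (sin_xj_ne hy j k)), L, Real.log_abs]
  · intro k _
    exact ne_of_gt (Real.rpow_pos_of_pos (abs_pos.mpr (sin_xj_ne hy j k)) _)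

lemma G_log {y : Fin n → ℝ} (hy : y ∈ S.D) (i : Fin n) :
    S.G y i = Real.log (S.Pval y i.succ) - Real.log (S.Pval y i.castSucc) := by
  rw [log_Pval hy, log_Pval hy, G, ← Finset.sum_sub_distrib]
  apply Finset.sum_congr rfl
  intro k _
  have h1 : S.x i.succ = S.X ((i:ℕ)+1) := S.X_succ i
  have h2 : S.x i.castSucc = S.X (i:ℕ) := S.X_castSucc i
  rw [h1, h2]
  ring

lemma mem_D_iff {y : Fin n → ℝ} :
    y ∈ S.D ↔ ∀ i : Fin n, S.x i.castSucc < y i ∧ y i < S.x i.succ := by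
  constructor
  · intro hy i
    exact ⟨(S.X_castSucc i) ▸ (hy i).1, (S.X_succ i) ▸ (hy i).2⟩
  · intro h i
    exact ⟨(S.X_castSucc i) ▸ (h i).1, (S.X_succ i) ▸ (h i).2⟩

lemma D_monotone {y : Fin n → ℝ} (hy : y ∈ S.D) : Monotone y := by
  intro k k' hkk'
  rcases eq_or_lt_of_le hkk' with rfl | hlt
  · exact le_refl _
  · have h1 : y k < S.X ((k:ℕ)+1) := (hy k).2
    have h2 : S.X (k':ℕ) < y k' := (hy k').1
    have h3 : S.X ((k:ℕ)+1) ≤ S.X (k':ℕ) := S.X_mono (by exact_mod_cast hlt)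
    linarith

end Setup

open Setup in
theorem master {n : ℕ} (hn : 1 ≤ n)
    (x : Fin (n + 1) → ℝ) (hx : StrictMono x) (hx01 : ∀ j, x j ∈ Icc (0:ℝ) 1)
    (ν a : Fin n → ℝ) (hν : ∀ k, 0 < ν k) (ha : ∀ k, 0 < a k ∧ a k ≤ 1)
    (α : Fin (n + 1) → ℝ) (hα : ∀ j, 0 < α j)
    (hgap : ∀ k, a k < 1 ∨ x (Fin.last n) - x 0 < 1) :
    ∃! Cy : ℝ × (Fin n → ℝ), 0 < Cy.1 ∧ Monotone Cy.2 ∧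
      (∀ i : Fin n, x i.castSucc < Cy.2 i ∧ Cy.2 i < x i.succ) ∧
      ∀ j : Fin (n + 1),
        Cy.1 * ∏ k, |Real.sin (a k * Real.pi * (x j - Cy.2 k))| ^ (ν k) = α j := by
  set S : Setup n := ⟨x, ν, a, hn, hx, hx01, hν, ha, hgap⟩ with hS
  set β : Fin n → ℝ := fun i => Real.log (α i.succ) - Real.log (α i.castSucc) with hβ
  obtain ⟨y, hyD, hGy⟩ := S.G_surj β
  set C : ℝ := α 0 / S.Pval y 0 with hC
  have hP0 : 0 < S.Pval y 0 := Pval_pos hyD 0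
  have hCpos : 0 < C := div_pos (hα 0) hP0
  -- the interpolation property
  have hmain : ∀ j, C * S.Pval y j = α j := by
    intro j
    induction j using Fin.induction with
    | zero =>
        rw [hC, div_mul_cancel₀]
        exact ne_of_gt hP0
    | succ i ih =>
        have hPs : 0 < S.Pval y i.succ := Pval_pos hyD i.succ
        have hPc : 0 < S.Pval y i.castSucc := Pval_pos hyD i.castSucc
        have hlog : Real.log (C * S.Pval y i.succ) = Real.log (α i.succ) := by
          rw [Real.log_mul (ne_of_gt hCpos) (ne_of_gt hPs)]
          have h1 : S.G y i = β i := congrFun hGy i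
          rw [G_log hyD i] at h1
          have h2 : Real.log (C * S.Pval y i.castSucc) = Real.log (α i.castSucc) := by
            rw [ih]
          rw [Real.log_mul (ne_of_gt hCpos) (ne_of_gt hPc)] at h2
          simp only [hβ] at h1
          linarith
        have := congrArg Real.exp hlog
        rwa [Real.exp_log (mul_pos hCpos hPs), Real.exp_log (hα i.succ)] at this
  refine ⟨(C, y), ⟨hCpos, D_monotone hyD, mem_D_iff.mp hyD, fun j => hmain j⟩, ?_⟩
  rintro ⟨C', y'⟩ ⟨hC', hmono', hbox', heq'⟩
  have hy'D : y' ∈ S.D := mem_D_iff.mpr hbox'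
  have hGy' : S.G y' = β := by
    funext i
    rw [G_log hy'D i, hβ]
    simp only []
    have h1 : C' * S.Pval y' i.succ = α i.succ := heq' i.succ
    have h2 : C' * S.Pval y' i.castSucc = α i.castSucc := heq' i.castSucc
    have hPs : 0 < S.Pval y' i.succ := Pval_pos hy'D i.succ
    have hPc : 0 < S.Pval y' i.castSucc := Pval_pos hy'D i.castSucc
    have l1 : Real.log C' + Real.log (S.Pval y' i.succ) = Real.log (α i.succ) := by
      rw [← Real.log_mul (ne_of_gt hC') (ne_of_gt hPs), h1]
    have l2 : Real.log C' + Real.log (S.Pval y' i.castSucc) = Real.log (α i.castSucc) := by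
      rw [← Real.log_mul (ne_of_gt hC') (ne_of_gt hPc), h2]
    linarith
  have hyy : y' = y := S.G_inj hy'D hyD (by rw [hGy, hGy'])
  have hCC : C' = C := by
    have h0 : C' * S.Pval y' 0 = α 0 := heq' 0
    rw [hyy] at h0
    apply mul_right_cancel₀ (ne_of_gt hP0)
    rw [h0, hmain 0]
  simp [hCC, hyy]

end TLI

end TLIdev

/-- (Trigonometric Lagrange interpolation.) For exponents `ν_k > 0`,
frequencies `0 < a_k ≤ 1` and positive values `α_j`: if `x_n - x_0 < 1` then there are a
unique `C > 0` and unique interlacing points `y` such that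
`S(t) = C ∏_k |sin(a_k π (t - y_k))|^{ν_k}` satisfies `S(x_j) = α_j` for all `j`;
moreover, if all `a_k < 1`, the same holds without the assumption `x_n - x_0 < 1`. -/
theorem trigonometric_lagrange_interpolation
    {n : ℕ} (hn : 1 ≤ n)
    (x : Fin (n + 1) → ℝ) (hx : StrictMono x) (hx01 : ∀ j, x j ∈ Icc (0:ℝ) 1)
    (ν a : Fin n → ℝ) (hν : ∀ k, 0 < ν k) (ha : ∀ k, 0 < a k ∧ a k ≤ 1)
    (α : Fin (n + 1) → ℝ) (hα : ∀ j, 0 < α j) :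
    (x (Fin.last n) - x 0 < 1 →
      ∃! Cy : ℝ × (Fin n → ℝ), 0 < Cy.1 ∧ Monotone Cy.2 ∧
        (∀ i : Fin n, x i.castSucc < Cy.2 i ∧ Cy.2 i < x i.succ) ∧
        ∀ j : Fin (n + 1),
          Cy.1 * ∏ k, |Real.sin (a k * Real.pi * (x j - Cy.2 k))| ^ (ν k) = α j) ∧
    ((∀ k, a k < 1) →
      ∃! Cy : ℝ × (Fin n → ℝ), 0 < Cy.1 ∧ Monotone Cy.2 ∧
        (∀ i : Fin n, x i.castSucc < Cy.2 i ∧ Cy.2 i < x i.succ) ∧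
        ∀ j : Fin (n + 1),
          Cy.1 * ∏ k, |Real.sin (a k * Real.pi * (x j - Cy.2 k))| ^ (ν k) = α j) := by
  constructor
  · intro hlt
    exact TLI.master hn x hx hx01 ν a hν ha α hα (fun k => Or.inr hlt)
  · intro hak
    exact TLI.master hn x hx hx01 ν a hν ha α hα (fun k => Or.inl (hak k))

end
end
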